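/- arXiv:2408.04727 — 4 statements merged into one kernel-verified Lean document; each statement's English description precedes it below -/
import Mathlib

section
/- Let q ≥ 1 be an integer, let G be a partially q-colored graph, let v be a free vertex of G with neighbors enumerated as v₁,…,v_d, and let ℓ₁ ≠ ℓ₂ be two colors. For each i = 1,…,d let Ĝ_i be the partially q-colored graph obtained from G − v by adding, for each j ≠ i, a new pinned leaf adjacent to v_j colored ℓ₂ if j < i and colored ℓ₁ if j > i, and adding a new free leaf v̂_i adjacent to v_i. Then for every w ∈ ℂ the telescoping identity Z^{ℓ₁}_{G,v}(w) · Π_{i=1}^{d} Z^{ℓ₂}_{Ĝ_i,v̂_i}(w) = Z^{ℓ₂}_{G,v}(w) · Π_{i=1}^{d} Z^{ℓ₁}_{Ĝ_i,v̂_i}(w) holds. -/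
attribute [local instance 10] Classical.propDecidable

noncomputable section

/-- A partially `q`-colored graph: a finite simple graph together with a set `S` of
pinned vertices and a pinning `pin` (only its values on `S` are relevant). -/
structure PCG (q : ℕ) where
  V : Type
  fin : Fintype V
  G : SimpleGraph V
  S : Finset V
  pin : V → Fin q

namespace PCG

variable {q : ℕ}

instance (H : PCG q) : Fintype H.V := H.fin

/-- colorings agreeing with the pinning on the pinned set -/
def admissible (H : PCG q) (ψ : H.V → Fin q) : Prop :=
  ∀ u ∈ H.S, ψ u = H.pin u

/-- the number of monochromatic edges of a coloring -/
def mono (H : PCG q) (ψ : H.V → Fin q) : ℕ :=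
  ((Finset.univ : Finset (Sym2 H.V)).filter
    (fun e => e ∈ H.G.edgeSet ∧ (e.map ψ).IsDiag)).card

/-- the (complex) Potts partition function of a partially colored graph -/
def Z (H : PCG q) (w : ℂ) : ℂ :=
  ∑ ψ ∈ Finset.univ.filter (fun ψ : H.V → Fin q => H.admissible ψ), w ^ H.mono ψ

/-- the partition function restricted to colorings giving `v` the color `j` -/
def Zc (H : PCG q) (v : H.V) (j : Fin q) (w : ℂ) : ℂ :=
  ∑ ψ ∈ Finset.univ.filter
      (fun ψ : H.V → Fin q => H.admissible ψ ∧ ψ v = j), w ^ H.mono ψ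

/-- the real Potts partition function -/
def Zr (H : PCG q) (w : ℝ) : ℝ :=
  ∑ ψ ∈ Finset.univ.filter (fun ψ : H.V → Fin q => H.admissible ψ), w ^ H.mono ψ

/-- the real partition function restricted to colorings giving `v` the color `j` -/
def Zcr (H : PCG q) (v : H.V) (j : Fin q) (w : ℝ) : ℝ :=
  ∑ ψ ∈ Finset.univ.filter
      (fun ψ : H.V → Fin q => H.admissible ψ ∧ ψ v = j), w ^ H.mono ψ

/-- the marginal probability that `v` receives the color `j` -/
def Pr (H : PCG q) (v : H.V) (j : Fin q) (w : ℝ) : ℝ :=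
  H.Zcr v j w / H.Zr w

/-- the neighborhood of a vertex -/
def nbhd (H : PCG q) (v : H.V) : Finset H.V :=
  Finset.univ.filter (fun u => H.G.Adj v u)

/-- the degree of a vertex -/
def deg (H : PCG q) (v : H.V) : ℕ := (H.nbhd v).card

/-- the free degree of a vertex: its number of free neighbors -/
def freeDeg (H : PCG q) (v : H.V) : ℕ :=
  ((H.nbhd v).filter (fun u => u ∉ H.S)).card

/-- the number of pinned neighbors of `v` colored `j` -/
def cvec (H : PCG q) (v : H.V) (j : Fin q) : ℕ :=
  ((H.nbhd v).filter (fun u => u ∈ H.S ∧ H.pin u = j)).card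

/-- the color `j` is blocked at `v`: some pinned neighbor of `v` is colored `j` -/
def blockedAt (H : PCG q) (v : H.V) (j : Fin q) : Prop :=
  ∃ u ∈ H.nbhd v, u ∈ H.S ∧ H.pin u = j

/-- the set of colors that are free at `v` -/
def freeColors (H : PCG q) (v : H.V) : Finset (Fin q) :=
  Finset.univ.filter (fun j => ¬ H.blockedAt v j)

/-- the graph has maximum degree at most `Δ` -/
def maxDegLE (H : PCG q) (Δ : ℕ) : Prop := ∀ u, H.deg u ≤ Δ

/-- the class 𝒢•: `H` is connected, has max degree at most `Δ`, its pinned vertices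
are leaves and form an independent set, and `v` is a free vertex -/
def GoodPair (Δ : ℕ) (H : PCG q) (v : H.V) : Prop :=
  H.G.Connected ∧ H.maxDegLE Δ ∧ (∀ u ∈ H.S, H.deg u = 1) ∧
    (∀ u ∈ H.S, ∀ u' ∈ H.S, ¬ H.G.Adj u u') ∧ v ∉ H.S

/-- `Ḡ`: the graph obtained by deleting all pinned neighbors of `v` -/
def bar (H : PCG q) (v : H.V) : PCG q where
  V := ↥{u : H.V | ¬(u ∈ H.S ∧ H.G.Adj v u)}
  fin := inferInstance
  G := H.G.induce {u : H.V | ¬(u ∈ H.S ∧ H.G.Adj v u)}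
  S := Finset.univ.filter (fun u => u.1 ∈ H.S)
  pin := fun u => H.pin u.1

/-- the vertex `v` viewed as a vertex of `Ḡ` -/
def barVert (H : PCG q) (v : H.V) : (H.bar v).V :=
  ⟨v, fun h => H.G.irrefl h.2⟩

/-- `G − v`: the graph obtained by deleting the vertex `v` -/
def deleteVert (H : PCG q) (v : H.V) : PCG q where
  V := ↥{u : H.V | u ≠ v}
  fin := inferInstance
  G := H.G.induce {u : H.V | u ≠ v}
  S := Finset.univ.filter (fun u => u.1 ∈ H.S)
  pin := fun u => H.pin u.1

/-- `G^{+ℓ}`: attach a new pinned leaf of color `ℓ` to the vertex `v` -/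
def addLeaf (H : PCG q) (v : H.V) (ℓ : Fin q) : PCG q where
  V := Option H.V
  fin := inferInstance
  G := SimpleGraph.fromRel (fun a b =>
    (∃ u u' : H.V, a = some u ∧ b = some u' ∧ H.G.Adj u u') ∨ (a = none ∧ b = some v))
  S := insert none (H.S.image some)
  pin := fun a => a.elim ℓ H.pin

/-- the complex log-ratio `R_{G,v;i,j}` -/
def logRatio (H : PCG q) (v : H.V) (i j : Fin q) (w : ℂ) : ℂ :=
  Complex.log (H.Zc v i w / H.Zc v j w)

/-- the vector `P_{G,v}(w) ∈ ℝ^{q−1}` of marginal differences -/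
def Pvec (H : PCG q) (v : H.V) (w : ℝ) (j : Fin (q - 1)) : ℝ :=
  (H.addLeaf v ⟨0, by have := j.2; omega⟩).Pr (some v) (Fin.castLE (Nat.sub_le q 1) j) w -
  (H.addLeaf v ⟨q - 1, by have := j.2; omega⟩).Pr (some v) (Fin.castLE (Nat.sub_le q 1) j) w

/-- the graph `Ĝ_i` of the telescoping procedure: delete `v` from `G`, attach to the
`j`-th neighbor of `v` (for `j ≠ i`) a pinned leaf colored `ℓ₂` if `j < i` and `ℓ₁`
if `j > i`, and attach a free leaf (the vertex `Sum.inr i`) to the `i`-th neighbor. -/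
def telescope (H : PCG q) (v : H.V) {d : ℕ} (nbrs : Fin d → H.V)
    (ℓ₁ ℓ₂ : Fin q) (i : Fin d) : PCG q where
  V := ↥{u : H.V | u ≠ v} ⊕ Fin d
  fin := inferInstance
  G := SimpleGraph.fromRel (fun a b =>
    (∃ u u' : ↥{u : H.V | u ≠ v}, a = Sum.inl u ∧ b = Sum.inl u' ∧ H.G.Adj u.1 u'.1) ∨
    (∃ (u : ↥{u : H.V | u ≠ v}) (j : Fin d), a = Sum.inl u ∧ b = Sum.inr j ∧ u.1 = nbrs j))
  S := (Finset.univ.filter (fun u : ↥{u : H.V | u ≠ v} => u.1 ∈ H.S)).image Sum.inl ∪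
       (Finset.univ.filter (fun j : Fin d => j ≠ i)).image Sum.inr
  pin := Sum.elim (fun u => H.pin u.1) (fun j => if (j : ℕ) < (i : ℕ) then ℓ₂ else ℓ₁)

end PCG

/-- extend a vector indexed by `Fin (q-1)` to `Fin q` by a zero last coordinate -/
def extendLast (q : ℕ) (x : Fin (q - 1) → ℂ) : Fin q → ℂ :=
  fun j => if h : (j : ℕ) < q - 1 then x ⟨j, h⟩ else 0

/-- the polynomial `P_c(w,x) = w^{c₁+1}e^{x₁} + Σ_{j=2}^{q−1} w^{c_j}e^{x_j} + w^{c_q}` -/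
def Ppoly (q : ℕ) (c : Fin q → ℕ) (w : ℂ) (x : Fin (q - 1) → ℂ) : ℂ :=
  ∑ j : Fin q, w ^ (c j + if (j : ℕ) = 0 then 1 else 0) * Complex.exp (extendLast q x j)

/-- the polynomial `Q_c(w,x) = w^{c₁}e^{x₁} + Σ_{j=2}^{q−1} w^{c_j}e^{x_j} + w^{c_q+1}` -/
def Qpoly (q : ℕ) (c : Fin q → ℕ) (w : ℂ) (x : Fin (q - 1) → ℂ) : ℂ :=
  ∑ j : Fin q, w ^ (c j + if (j : ℕ) = q - 1 then 1 else 0) * Complex.exp (extendLast q x j)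

/-- the map `F_{w,c}(x) = Log (P_c(w,x)/Q_c(w,x))` -/
def Fmap (q : ℕ) (c : Fin q → ℕ) (w : ℂ) (x : Fin (q - 1) → ℂ) : ℂ :=
  Complex.log (Ppoly q c w x / Qpoly q c w x)

/-- real version of `extendLast` -/
def extendLastR (q : ℕ) (x : Fin (q - 1) → ℝ) : Fin q → ℝ :=
  fun j => if h : (j : ℕ) < q - 1 then x ⟨j, h⟩ else 0

/-- real version of `Ppoly` -/
def PpolyR (q : ℕ) (c : Fin q → ℕ) (w : ℝ) (x : Fin (q - 1) → ℝ) : ℝ :=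
  ∑ j : Fin q, w ^ (c j + if (j : ℕ) = 0 then 1 else 0) * Real.exp (extendLastR q x j)

/-- real version of `Qpoly` -/
def QpolyR (q : ℕ) (c : Fin q → ℕ) (w : ℝ) (x : Fin (q - 1) → ℝ) : ℝ :=
  ∑ j : Fin q, w ^ (c j + if (j : ℕ) = q - 1 then 1 else 0) * Real.exp (extendLastR q x j)

/-- real version of `Fmap`, i.e. `F_{w,c}` viewed as a real function on `ℝ^{q−1}` -/
def FmapR (q : ℕ) (c : Fin q → ℕ) (w : ℝ) (x : Fin (q - 1) → ℝ) : ℝ :=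
  Real.log (PpolyR q c w x / QpolyR q c w x)

section Aux

namespace PCG

variable {q : ℕ}

private lemma mem_filter' {α : Type*} {p : α → Prop} {inst : DecidablePred p} {s : Finset α}
    {a : α} : a ∈ @Finset.filter α p inst s ↔ a ∈ s ∧ p a := Finset.mem_filter

private lemma mem_union' {α : Type*} {inst : DecidableEq α} {s t : Finset α} {a : α} :
    a ∈ @Union.union _ (@Finset.instUnion α inst) s t ↔ a ∈ s ∨ a ∈ t := Finset.mem_union

private lemma mem_image' {α β : Type*} {inst : DecidableEq β} {f : α → β} {s : Finset α} {b : β} :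
    b ∈ @Finset.image α β inst f s ↔ ∃ a ∈ s, f a = b := Finset.mem_image

private lemma prod_ite_card {α : Type} [Fintype α] (w : ℂ) (P : α → Prop) [DecidablePred P] :
    (∏ j : α, if P j then w else 1) = w ^ (Finset.univ.filter P).card := by
  classical
  rw [Finset.prod_ite, Finset.prod_const, Finset.prod_const, one_pow, mul_one]

private lemma monoSplitG (H : PCG q) (v : H.V)
    (d : ℕ) (nbrs : Fin d → H.V) (hinj : Function.Injective nbrs)
    (hadj : ∀ j : Fin d, H.G.Adj v (nbrs j))
    (hsurj : ∀ u : H.V, H.G.Adj v u → ∃ j : Fin d, nbrs j = u)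
    (ψ : H.V → Fin q) :
    H.mono ψ = (H.deleteVert v).mono (fun u => ψ u.1) +
      (Finset.univ.filter (fun j : Fin d => ψ (nbrs j) = ψ v)).card := by
  classical
  have hsplit := Finset.card_filter_add_card_filter_not
      (s := Finset.univ.filter (fun e : Sym2 H.V => e ∈ H.G.edgeSet ∧ (e.map ψ).IsDiag))
      (fun e : Sym2 H.V => v ∈ e)
  rw [Finset.filter_filter, Finset.filter_filter] at hsplit
  have hA : (Finset.univ.filter (fun e : Sym2 H.V =>
      (e ∈ H.G.edgeSet ∧ (e.map ψ).IsDiag) ∧ v ∈ e)).card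
      = (Finset.univ.filter (fun j : Fin d => ψ (nbrs j) = ψ v)).card := by
    refine (Finset.card_bij (fun j _ => s(v, nbrs j)) ?_ ?_ ?_).symm
    · intro j hj
      simp only [Finset.mem_filter, Finset.mem_univ, true_and] at hj ⊢
      refine ⟨⟨H.G.mem_edgeSet.mpr (hadj j), ?_⟩, ?_⟩
      · rw [Sym2.map_pair_eq, Sym2.mk_isDiag_iff]; exact hj.symm
      · simp [Sym2.mem_iff]
    · intro a _ b _ hab
      exact hinj (Sym2.congr_right.mp hab)
    · intro e he
      simp only [Finset.mem_filter, Finset.mem_univ, true_and] at he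
      obtain ⟨⟨hedge, hdiag⟩, hve⟩ := he
      obtain ⟨u, hu⟩ : ∃ u, s(v, u) = e := ⟨Sym2.Mem.other hve, Sym2.other_spec hve⟩
      have hadjvu : H.G.Adj v u := by rw [← SimpleGraph.mem_edgeSet, hu]; exact hedge
      obtain ⟨j, hj⟩ := hsurj u hadjvu
      refine ⟨j, ?_, show s(v, nbrs j) = e by rw [hj]; exact hu⟩
      simp only [Finset.mem_filter, Finset.mem_univ, true_and]
      rw [← hu, Sym2.map_pair_eq, Sym2.mk_isDiag_iff] at hdiag
      rw [hj]; exact hdiag.symm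
  have hB : (Finset.univ.filter (fun e : Sym2 H.V =>
      (e ∈ H.G.edgeSet ∧ (e.map ψ).IsDiag) ∧ ¬ v ∈ e)).card
      = (H.deleteVert v).mono (fun u => ψ u.1) := by
    unfold PCG.mono
    refine (Finset.card_bij (fun e _ => Sym2.map Subtype.val e) ?_ ?_ ?_).symm
    · intro e he
      induction e using Sym2.ind with
      | _ a b =>
        replace he := (PCG.mem_filter'.mp he).2
        simp only [Finset.mem_filter, Finset.mem_univ, true_and, Sym2.map_pair_eq] at he ⊢
        obtain ⟨hedge, hdiag⟩ := he
        have hadj' : H.G.Adj a.1 b.1 := by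
          have := (SimpleGraph.mem_edgeSet _).mp hedge
          exact SimpleGraph.comap_adj.mp this
        refine ⟨⟨(SimpleGraph.mem_edgeSet _).mpr hadj', ?_⟩, ?_⟩
        · exact hdiag
        · intro hv
          rcases Sym2.mem_iff.mp hv with h | h
          · exact a.2 h.symm
          · exact b.2 h.symm
    · intro a _ b _ hab
      exact Sym2.map.injective Subtype.val_injective hab
    · intro e he
      induction e using Sym2.ind with
      | _ x y =>
        simp only [Finset.mem_filter, Finset.mem_univ, true_and] at he
        obtain ⟨⟨hedge, hdiag⟩, hve⟩ := he
        have hx : x ≠ v := fun h => hve (by rw [h]; exact Sym2.mem_mk_left v y)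
        have hy : y ≠ v := fun h => hve (by rw [h]; exact Sym2.mem_mk_right x v)
        refine ⟨s(⟨x, hx⟩, ⟨y, hy⟩), ?_, show Sym2.map Subtype.val s(⟨x, hx⟩, ⟨y, hy⟩) = s(x, y) by rw [Sym2.map_pair_eq]⟩
        refine PCG.mem_filter'.mpr ⟨Finset.mem_univ _, ?_⟩
        constructor
        · exact (SimpleGraph.mem_edgeSet _).mpr
            (SimpleGraph.comap_adj.mpr ((SimpleGraph.mem_edgeSet _).mp hedge))

        · show (Sym2.map ψ s(x, y)).IsDiag
          rw [Sym2.map_pair_eq] at hdiag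
          exact hdiag
  unfold PCG.mono at hB ⊢
  rw [← hsplit, hA, hB, Nat.add_comm]


private lemma telescope_adj_ll (H : PCG q) (v : H.V) {d : ℕ} (nbrs : Fin d → H.V)
    (ℓ₁ ℓ₂ : Fin q) (i : Fin d) (a b : ↥{u : H.V | u ≠ v}) :
    (H.telescope v nbrs ℓ₁ ℓ₂ i).G.Adj (Sum.inl a) (Sum.inl b) ↔ H.G.Adj a.1 b.1 := by
  show (SimpleGraph.fromRel _).Adj _ _ ↔ _
  refine (SimpleGraph.fromRel_adj _ _ _).trans ?_
  constructor
  · rintro ⟨hne, h | h⟩ <;>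
    · rcases h with ⟨u, u', h1, h2, h3⟩ | ⟨u, j, h1, h2, h3⟩
      · rw [Sum.inl.injEq] at h1 h2
        subst h1; subst h2
        first
          | exact h3
          | exact h3.symm
      · exact absurd h2 (by simp)
  · intro h
    refine ⟨fun hab => h.ne (congrArg Subtype.val (Sum.inl_injective hab)), Or.inl (Or.inl ⟨a, b, rfl, rfl, h⟩)⟩

private lemma telescope_adj_lr (H : PCG q) (v : H.V) {d : ℕ} (nbrs : Fin d → H.V)
    (ℓ₁ ℓ₂ : Fin q) (i : Fin d) (a : ↥{u : H.V | u ≠ v}) (j : Fin d) :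
    (H.telescope v nbrs ℓ₁ ℓ₂ i).G.Adj (Sum.inl a) (Sum.inr j) ↔ a.1 = nbrs j := by
  show (SimpleGraph.fromRel _).Adj _ _ ↔ _
  refine (SimpleGraph.fromRel_adj _ _ _).trans ?_
  constructor
  · rintro ⟨hne, h | h⟩
    · rcases h with ⟨u, u', h1, h2, h3⟩ | ⟨u, j', h1, h2, h3⟩
      · exact absurd h2 (by simp)
      · rw [Sum.inl.injEq] at h1
        rw [Sum.inr.injEq] at h2
        subst h1; subst h2; exact h3
    · rcases h with ⟨u, u', h1, h2, h3⟩ | ⟨u, j', h1, h2, h3⟩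
      · exact absurd h1 (by simp)
      · exact absurd h1 (by simp)
  · intro h
    exact ⟨Sum.inl_ne_inr, Or.inl (Or.inr ⟨a, j, rfl, rfl, h⟩)⟩

private lemma telescope_adj_rr (H : PCG q) (v : H.V) {d : ℕ} (nbrs : Fin d → H.V)
    (ℓ₁ ℓ₂ : Fin q) (i : Fin d) (j j' : Fin d) :
    ¬ (H.telescope v nbrs ℓ₁ ℓ₂ i).G.Adj (Sum.inr j) (Sum.inr j') := by
  intro h
  have h' := (SimpleGraph.fromRel_adj _ _ _).mp h
  rcases h' with ⟨hne, h | h⟩ <;>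
  · rcases h with ⟨u, u', h1, h2, h3⟩ | ⟨u, k, h1, h2, h3⟩
    · exact absurd h1 (by simp)
    · exact absurd h1 (by simp)

private lemma monoSplitT (H : PCG q) (v : H.V) {d : ℕ} (nbrs : Fin d → H.V)
    (hadj : ∀ j : Fin d, H.G.Adj v (nbrs j)) (ℓ₁ ℓ₂ : Fin q) (i : Fin d)
    (ψ : (H.telescope v nbrs ℓ₁ ℓ₂ i).V → Fin q) :
    (H.telescope v nbrs ℓ₁ ℓ₂ i).mono ψ =
      (H.deleteVert v).mono (fun u => ψ (Sum.inl u)) +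
      (Finset.univ.filter (fun j : Fin d =>
        ψ (Sum.inl ⟨nbrs j, (hadj j).ne'⟩) = ψ (Sum.inr j))).card := by
  classical
  have hsplit := Finset.card_filter_add_card_filter_not
      (s := Finset.univ.filter (fun e : Sym2 (H.telescope v nbrs ℓ₁ ℓ₂ i).V =>
        e ∈ (H.telescope v nbrs ℓ₁ ℓ₂ i).G.edgeSet ∧ (e.map ψ).IsDiag))
      (fun e => ∃ j : Fin d, Sum.inr j ∈ e)
  rw [Finset.filter_filter, Finset.filter_filter] at hsplit
  have hA : (Finset.univ.filter (fun e : Sym2 (H.telescope v nbrs ℓ₁ ℓ₂ i).V =>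
      (e ∈ (H.telescope v nbrs ℓ₁ ℓ₂ i).G.edgeSet ∧ (e.map ψ).IsDiag) ∧
        ∃ j : Fin d, Sum.inr j ∈ e)).card
      = (Finset.univ.filter (fun j : Fin d =>
          ψ (Sum.inl ⟨nbrs j, (hadj j).ne'⟩) = ψ (Sum.inr j))).card := by
    refine (Finset.card_bij
      (fun j _ => s(Sum.inl ⟨nbrs j, (hadj j).ne'⟩, Sum.inr j)) ?_ ?_ ?_).symm
    · intro j hj
      simp only [Finset.mem_filter, Finset.mem_univ, true_and] at hj ⊢
      refine PCG.mem_filter'.mpr ⟨Finset.mem_univ _, ?_⟩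
      refine ⟨⟨(SimpleGraph.mem_edgeSet _).mpr
          ((telescope_adj_lr H v nbrs ℓ₁ ℓ₂ i _ j).mpr rfl), ?_⟩, ⟨j, ?_⟩⟩
      · exact hj
      · exact Sym2.mem_mk_right _ _
    · intro a _ b _ hab
      rcases Sym2.eq_iff.mp hab with ⟨h1, h2⟩ | ⟨h1, h2⟩
      · exact Sum.inr_injective h2
      · exact absurd h1 (by simp)
    · intro e he
      replace he := (PCG.mem_filter'.mp he).2
      obtain ⟨⟨hedge, hdiag⟩, j, hj⟩ := he
      have hspec := Sym2.other_spec hj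
      have hadjx : (H.telescope v nbrs ℓ₁ ℓ₂ i).G.Adj (Sum.inr j) (Sym2.Mem.other hj) := by
        have h' := hedge
        rw [← hspec] at h'
        exact (SimpleGraph.mem_edgeSet _).mp h'
      rcases hx : Sym2.Mem.other hj with a | j'
      · rw [hx] at hspec
        replace hadjx : (H.telescope v nbrs ℓ₁ ℓ₂ i).G.Adj (Sum.inr j) (Sum.inl a) := by rwa [← hx]
        have ha : a.1 = nbrs j := (telescope_adj_lr H v nbrs ℓ₁ ℓ₂ i a j).mp hadjx.symm
        have ha' : (⟨nbrs j, (hadj j).ne'⟩ : ↥{u : H.V | u ≠ v}) = a := Subtype.ext ha.symm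
        refine ⟨j, ?_, ?_⟩
        · simp only [Finset.mem_filter, Finset.mem_univ, true_and]
          rw [← hspec] at hdiag; replace hdiag : ψ (Sum.inr j) = ψ (Sum.inl a) := hdiag
          rw [ha']
          exact hdiag.symm
        · show s(Sum.inl ⟨nbrs j, (hadj j).ne'⟩, Sum.inr j) = e
          rw [ha', ← hspec, Sym2.eq_swap]
      · replace hadjx : (H.telescope v nbrs ℓ₁ ℓ₂ i).G.Adj (Sum.inr j) (Sum.inr j') := by rwa [← hx]
        exact absurd hadjx (telescope_adj_rr H v nbrs ℓ₁ ℓ₂ i j j')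
  have hB : (Finset.univ.filter (fun e : Sym2 (H.telescope v nbrs ℓ₁ ℓ₂ i).V =>
      (e ∈ (H.telescope v nbrs ℓ₁ ℓ₂ i).G.edgeSet ∧ (e.map ψ).IsDiag) ∧
        ¬ ∃ j : Fin d, Sum.inr j ∈ e)).card
      = (H.deleteVert v).mono (fun u => ψ (Sum.inl u)) := by
    unfold PCG.mono
    refine (Finset.card_bij (fun e _ => Sym2.map Sum.inl e) ?_ ?_ ?_).symm
    · intro e he
      induction e using Sym2.ind with
      | _ a b =>
        replace he := (PCG.mem_filter'.mp he).2
        refine PCG.mem_filter'.mpr ⟨Finset.mem_univ _, ?_⟩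
        simp only [Finset.mem_filter, Finset.mem_univ, true_and, Sym2.map_pair_eq] at he ⊢
        obtain ⟨hedge, hdiag⟩ := he
        have hadj' : H.G.Adj a.1 b.1 :=
          SimpleGraph.comap_adj.mp ((SimpleGraph.mem_edgeSet _).mp hedge)
        refine ⟨⟨(SimpleGraph.mem_edgeSet _).mpr
            ((telescope_adj_ll H v nbrs ℓ₁ ℓ₂ i a b).mpr hadj'), ?_⟩, ?_⟩
        · exact hdiag
        · rintro ⟨j, hj⟩
          rcases Sym2.mem_iff.mp hj with h | h <;> exact absurd h (by simp)
    · intro a _ b _ hab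
      exact Sym2.map.injective Sum.inl_injective hab
    · intro e he
      replace he := (PCG.mem_filter'.mp he).2
      obtain ⟨⟨hedge, hdiag⟩, hnr⟩ := he
      induction e using Sym2.ind with
      | _ x y =>
        rcases hx : x with a | j
        · rcases hy : y with b | j'
          · subst hx; subst hy
            refine ⟨s(a, b), ?_, show Sym2.map Sum.inl s(a, b) = s(Sum.inl a, Sum.inl b)
              by rw [Sym2.map_pair_eq]⟩
            refine PCG.mem_filter'.mpr ⟨Finset.mem_univ _, ?_⟩
            constructor
            · exact (SimpleGraph.mem_edgeSet _).mpr (SimpleGraph.comap_adj.mpr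
                ((telescope_adj_ll H v nbrs ℓ₁ ℓ₂ i a b).mp
                  ((SimpleGraph.mem_edgeSet _).mp hedge)))
            · exact hdiag
          · exact absurd ⟨j', by rw [hy]; exact Sym2.mem_mk_right x (Sum.inr j')⟩ hnr
        · exact absurd ⟨j, by rw [hx]; exact Sym2.mem_mk_left (Sum.inr j) y⟩ hnr
  unfold PCG.mono at hB ⊢
  rw [← hsplit, hA, hB, Nat.add_comm]


private lemma ZcG (H : PCG q) (v : H.V) (hv : v ∉ H.S)
    (d : ℕ) (nbrs : Fin d → H.V) (hinj : Function.Injective nbrs)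
    (hadj : ∀ j : Fin d, H.G.Adj v (nbrs j))
    (hsurj : ∀ u : H.V, H.G.Adj v u → ∃ j : Fin d, nbrs j = u)
    (ℓ : Fin q) (w : ℂ) :
    H.Zc v ℓ w = ∑ σ ∈ Finset.univ.filter
        (fun σ : (H.deleteVert v).V → Fin q => (H.deleteVert v).admissible σ),
      w ^ (H.deleteVert v).mono σ *
        ∏ j : Fin d, (if σ ⟨nbrs j, (hadj j).ne'⟩ = ℓ then w else 1) := by
  classical
  unfold PCG.Zc
  refine Finset.sum_bij' (fun ψ _ => fun u => ψ u.1)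
      (fun σ _ => fun u => if h : u = v then ℓ else σ ⟨u, h⟩) ?_ ?_ ?_ ?_ ?_
  · intro ψ hψ
    simp only [Finset.mem_filter, Finset.mem_univ, true_and] at hψ ⊢
    intro u hu
    have hu' : u.1 ∈ H.S := by
      have := Finset.mem_filter.mp hu
      exact this.2
    exact hψ.1 u.1 hu'
  · intro σ hσ
    simp only [Finset.mem_filter, Finset.mem_univ, true_and] at hσ ⊢
    constructor
    · intro u hu
      have hne : u ≠ v := fun h => hv (h ▸ hu)
      show (if h : u = v then ℓ else σ ⟨u, h⟩) = H.pin u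
      rw [dif_neg hne]
      exact hσ ⟨u, hne⟩ (Finset.mem_filter.mpr ⟨Finset.mem_univ _, hu⟩)
    · simp
  · intro ψ hψ
    simp only [Finset.mem_filter, Finset.mem_univ, true_and] at hψ
    funext u
    show (if h : u = v then ℓ else ψ u) = ψ u
    by_cases h : u = v
    · rw [dif_pos h]; rw [h]; exact hψ.2.symm
    · rw [dif_neg h]
  · intro σ _
    funext u
    show (if h : u.1 = v then ℓ else σ ⟨u.1, h⟩) = σ u
    rw [dif_neg u.2]
    rfl
  · intro ψ hψ
    simp only [Finset.mem_filter, Finset.mem_univ, true_and] at hψ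
    beta_reduce
    rw [PCG.monoSplitG H v d nbrs hinj hadj hsurj ψ, hψ.2, pow_add, PCG.prod_ite_card]

private lemma ZcT (H : PCG q) (v : H.V) (hv : v ∉ H.S)
    (d : ℕ) (nbrs : Fin d → H.V)
    (hadj : ∀ j : Fin d, H.G.Adj v (nbrs j))
    (ℓ₁ ℓ₂ ℓ : Fin q) (i : Fin d) (w : ℂ) :
    (H.telescope v nbrs ℓ₁ ℓ₂ i).Zc (Sum.inr i) ℓ w =
      ∑ σ ∈ Finset.univ.filter
        (fun σ : (H.deleteVert v).V → Fin q => (H.deleteVert v).admissible σ),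
      w ^ (H.deleteVert v).mono σ *
        ∏ j : Fin d, (if σ ⟨nbrs j, (hadj j).ne'⟩ =
            (if j = i then ℓ else if (j : ℕ) < (i : ℕ) then ℓ₂ else ℓ₁) then w else 1) := by
  classical
  set g : Fin d → Fin q :=
    fun j => if j = i then ℓ else if (j : ℕ) < (i : ℕ) then ℓ₂ else ℓ₁ with hg
  have hmemS : ∀ x, x ∈ (H.telescope v nbrs ℓ₁ ℓ₂ i).S ↔
      ((∃ u : (H.deleteVert v).V, x = Sum.inl u ∧ u.1 ∈ H.S) ∨
       (∃ j : Fin d, x = Sum.inr j ∧ j ≠ i)) := by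
    intro x
    refine PCG.mem_union'.trans ?_
    refine (or_congr PCG.mem_image' PCG.mem_image').trans ?_
    simp only [PCG.telescope, Finset.mem_union, Finset.mem_image, Finset.mem_filter,
      Finset.mem_univ, true_and]
    constructor
    · rintro (⟨u, hu, rfl⟩ | ⟨j, hj, rfl⟩)
      · exact Or.inl ⟨u, rfl, hu⟩
      · exact Or.inr ⟨j, rfl, hj⟩
    · rintro (⟨u, rfl, hu⟩ | ⟨j, rfl, hj⟩)
      · exact Or.inl ⟨u, hu, rfl⟩
      · exact Or.inr ⟨j, hj, rfl⟩
  unfold PCG.Zc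
  refine Finset.sum_bij' (fun ψ _ => fun u => ψ (Sum.inl u))
      (fun σ _ => Sum.elim σ g) ?_ ?_ ?_ ?_ ?_
  · intro ψ hψ
    simp only [Finset.mem_filter, Finset.mem_univ, true_and] at hψ ⊢
    intro u hu
    have hu' : u.1 ∈ H.S := (Finset.mem_filter.mp hu).2
    exact hψ.1 (Sum.inl u) ((hmemS _).mpr (Or.inl ⟨u, rfl, hu'⟩))
  · intro σ hσ
    simp only [Finset.mem_filter, Finset.mem_univ, true_and] at hσ ⊢
    refine PCG.mem_filter'.mpr ⟨Finset.mem_univ _, ?_⟩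
    constructor
    · intro x hx
      rcases (hmemS x).mp hx with ⟨u, rfl, hu⟩ | ⟨j, rfl, hj⟩
      · exact hσ u (Finset.mem_filter.mpr ⟨Finset.mem_univ _, hu⟩)
      · show g j = _
        rw [hg]
        simp only [if_neg hj]
        rfl
    · show g i = ℓ
      rw [hg]; simp
  · intro ψ hψ
    simp only [Finset.mem_filter, Finset.mem_univ, true_and] at hψ
    funext x
    cases x with
    | inl u => rfl
    | inr j =>
      show g j = ψ (Sum.inr j)
      by_cases hj : j = i
      · subst hj
        rw [hg]; simp only [if_pos rfl]
        exact hψ.2.symm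
      · rw [hg]; simp only [if_neg hj]
        exact (hψ.1 (Sum.inr j) ((hmemS _).mpr (Or.inr ⟨j, rfl, hj⟩))).symm
  · intro σ _
    funext u
    rfl
  · intro ψ hψ
    simp only [Finset.mem_filter, Finset.mem_univ, true_and] at hψ
    have hval : ∀ j : Fin d, ψ (Sum.inr j) = g j := by
      intro j
      by_cases hj : j = i
      · subst hj; rw [hψ.2, hg]; simp
      · rw [hψ.1 (Sum.inr j) ((hmemS _).mpr (Or.inr ⟨j, rfl, hj⟩)), hg]
        simp only [if_neg hj]
        rfl
    beta_reduce
    rw [PCG.monoSplitT H v nbrs hadj ℓ₁ ℓ₂ i ψ, pow_add, PCG.prod_ite_card]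
    congr 1
    congr 1
    apply congrArg
    apply Finset.filter_congr
    intro j _
    rw [hval j]

end PCG

end Aux
/-- The telescoping identity: with `Ĝ_i = H.telescope v nbrs ℓ₁ ℓ₂ i` and free leaf
`v̂_i = Sum.inr i`, one has
`Z^{ℓ₁}_{G,v}(w) · Π_i Z^{ℓ₂}_{Ĝ_i,v̂_i}(w) = Z^{ℓ₂}_{G,v}(w) · Π_i Z^{ℓ₁}_{Ĝ_i,v̂_i}(w)`. -/
theorem telescoping (q : ℕ) (hq : 1 ≤ q) (H : PCG q) (v : H.V) (hv : v ∉ H.S)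
    (d : ℕ) (nbrs : Fin d → H.V) (hinj : Function.Injective nbrs)
    (hadj : ∀ j : Fin d, H.G.Adj v (nbrs j))
    (hsurj : ∀ u : H.V, H.G.Adj v u → ∃ j : Fin d, nbrs j = u)
    (ℓ₁ ℓ₂ : Fin q) (hne : ℓ₁ ≠ ℓ₂) (w : ℂ) :
    H.Zc v ℓ₁ w * ∏ i : Fin d, (H.telescope v nbrs ℓ₁ ℓ₂ i).Zc (Sum.inr i) ℓ₂ w =
    H.Zc v ℓ₂ w * ∏ i : Fin d, (H.telescope v nbrs ℓ₁ ℓ₂ i).Zc (Sum.inr i) ℓ₁ w := by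

  classical
  let Tk : ℕ → ℂ := fun k =>
    ∑ σ ∈ Finset.univ.filter
        (fun σ : (H.deleteVert v).V → Fin q => (H.deleteVert v).admissible σ),
      w ^ (H.deleteVert v).mono σ *
        ∏ j : Fin d, (if σ ⟨nbrs j, (hadj j).ne'⟩ =
            (if (j : ℕ) < k then ℓ₂ else ℓ₁) then w else 1)
  have hG1 : H.Zc v ℓ₁ w = Tk 0 := by
    rw [PCG.ZcG H v hv d nbrs hinj hadj hsurj ℓ₁ w]
    refine Finset.sum_congr rfl fun σ _ => ?_
    congr 1
    all_goals (refine Finset.prod_congr rfl fun j _ => ?_; rw [if_neg (Nat.not_lt_zero _)])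
  have hG2 : H.Zc v ℓ₂ w = Tk d := by
    rw [PCG.ZcG H v hv d nbrs hinj hadj hsurj ℓ₂ w]
    refine Finset.sum_congr rfl fun σ _ => ?_
    congr 1
    all_goals (refine Finset.prod_congr rfl fun j _ => ?_; rw [if_pos j.isLt])
  have hT1 : ∀ i : Fin d, (H.telescope v nbrs ℓ₁ ℓ₂ i).Zc (Sum.inr i) ℓ₁ w = Tk i := by
    intro i
    rw [PCG.ZcT H v hv d nbrs hadj ℓ₁ ℓ₂ ℓ₁ i w]
    refine Finset.sum_congr rfl fun σ _ => ?_
    congr 1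
    refine Finset.prod_congr rfl fun j _ => ?_
    have hcol : (if j = i then ℓ₁ else if (j : ℕ) < (i : ℕ) then ℓ₂ else ℓ₁)
        = (if (j : ℕ) < (i : ℕ) then ℓ₂ else ℓ₁) := by
      by_cases hj : j = i
      · subst hj; simp
      · rw [if_neg hj]
    rw [hcol]
  have hT2 : ∀ i : Fin d, (H.telescope v nbrs ℓ₁ ℓ₂ i).Zc (Sum.inr i) ℓ₂ w = Tk ((i : ℕ) + 1) := by
    intro i
    rw [PCG.ZcT H v hv d nbrs hadj ℓ₁ ℓ₂ ℓ₂ i w]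
    refine Finset.sum_congr rfl fun σ _ => ?_
    congr 1
    refine Finset.prod_congr rfl fun j _ => ?_
    have hcol : (if j = i then ℓ₂ else if (j : ℕ) < (i : ℕ) then ℓ₂ else ℓ₁)
        = (if (j : ℕ) < (i : ℕ) + 1 then ℓ₂ else ℓ₁) := by
      by_cases hj : j = i
      · subst hj; simp
      · have hne2 : (j : ℕ) ≠ (i : ℕ) := fun h => hj (Fin.ext h)
        rw [if_neg hj]
        exact if_congr (by omega) rfl rfl
    rw [hcol]
  rw [hG1, hG2, Finset.prod_congr rfl (fun i _ => hT2 i),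
    Finset.prod_congr rfl (fun i _ => hT1 i)]
  have e1 : (∏ i : Fin d, Tk ((i : ℕ) + 1)) = ∏ k ∈ Finset.range d, Tk (k + 1) :=
    Fin.prod_univ_eq_prod_range (fun k => Tk (k + 1)) d
  have e2 : (∏ i : Fin d, Tk (i : ℕ)) = ∏ k ∈ Finset.range d, Tk k :=
    Fin.prod_univ_eq_prod_range (fun k => Tk k) d
  rw [e1, e2, mul_comm (Tk 0), mul_comm (Tk (d : ℕ)), ← Finset.prod_range_succ',
    ← Finset.prod_range_succ]
end
end

section
/- Let Δ ≥ 1 and q > Δ + 1 be integers, let w ∈ [0,1], and let (H,v) ∈ 𝒢•_{Δ,q} be such that Z^j_{H̄,v}(w) > 0 for every color j ∈ {1,…,q} and Z_{H^{+1}}(w) > 0 and Z_{H^{+q}}(w) > 0. Let c = c_{H,v} ∈ ℕ^q, and let R ∈ ℝ^{q−1} be defined by R_j = log(Z^j_{H̄,v}(w)/Z^q_{H̄,v}(w)). Then F_{w,c}, viewed as a real function on ℝ^{q−1}, is differentiable at R and for every j ∈ {1,…,q−1} its partial derivative satisfies ∂F_{w,c}/∂x_j (R) = P_{H^{+1},w}[Φ(v)=j]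 − P_{H^{+q},w}[Φ(v)=j]; that is, ∇F_{w,c}(R) = P_{H,v}(w). -/
attribute [local instance 10] Classical.propDecidable

noncomputable section

namespace PCG

variable {q : ℕ} (H : PCG q) (v : H.V)

lemma addLeaf_adj (ℓ : Fin q) (a b : Option H.V) :
    (H.addLeaf v ℓ).G.Adj a b ↔
      (∃ u u', a = some u ∧ b = some u' ∧ H.G.Adj u u') ∨
      (a = none ∧ b = some v) ∨ (a = some v ∧ b = none) := by
  show (SimpleGraph.fromRel _).Adj a b ↔ _
  rw [SimpleGraph.fromRel_adj]
  constructor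
  · rintro ⟨hne, (⟨u, u', rfl, rfl, h⟩ | ⟨rfl, rfl⟩) | (⟨u, u', rfl, rfl, h⟩ | ⟨rfl, rfl⟩)⟩
    · exact Or.inl ⟨u, u', rfl, rfl, h⟩
    · exact Or.inr (Or.inl ⟨rfl, rfl⟩)
    · exact Or.inl ⟨u', u, rfl, rfl, h.symm⟩
    · exact Or.inr (Or.inr ⟨rfl, rfl⟩)
  · rintro (⟨u, u', rfl, rfl, h⟩ | ⟨rfl, rfl⟩ | ⟨rfl, rfl⟩)
    · exact ⟨by simpa using h.ne, Or.inl (Or.inl ⟨u, u', rfl, rfl, h⟩)⟩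
    · exact ⟨by simp, Or.inl (Or.inr ⟨rfl, rfl⟩)⟩
    · exact ⟨by simp, Or.inr (Or.inr ⟨rfl, rfl⟩)⟩

lemma pn_adj {Δ : ℕ} (hGP : H.GoodPair Δ v) {u x : H.V}
    (hu : u ∈ H.S ∧ H.G.Adj v u) (hx : H.G.Adj u x) : x = v := by
  have hdeg : H.deg u = 1 := hGP.2.2.1 u hu.1
  have hv : v ∈ H.nbhd u := by simp [nbhd, hu.2.symm]
  have hxx : x ∈ H.nbhd u := by simp [nbhd, hx]
  exact Finset.card_le_one.1 (le_of_eq hdeg) x hxx v hv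

/-- extend a coloring of `H̄` to a coloring of `H^{+ℓ}` -/
def extColor (ℓ : Fin q) (ψ : (H.bar v).V → Fin q) : Option H.V → Fin q :=
  fun a => a.elim ℓ (fun u =>
    if h : ¬(u ∈ H.S ∧ H.G.Adj v u) then ψ ⟨u, h⟩ else H.pin u)

lemma extColor_none (ℓ : Fin q) (ψ : (H.bar v).V → Fin q) :
    extColor H v ℓ ψ none = ℓ := rfl

lemma extColor_free (ℓ : Fin q) (ψ : (H.bar v).V → Fin q) (u : H.V)
    (h : ¬(u ∈ H.S ∧ H.G.Adj v u)) :
    extColor H v ℓ ψ (some u) = ψ ⟨u, h⟩ := by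
  simp only [extColor, Option.elim]
  rw [dif_pos h]

lemma extColor_pn (ℓ : Fin q) (ψ : (H.bar v).V → Fin q) (u : H.V)
    (h : u ∈ H.S ∧ H.G.Adj v u) :
    extColor H v ℓ ψ (some u) = H.pin u := by
  simp only [extColor, Option.elim]
  rw [dif_neg (not_not_intro h)]

lemma extColor_v {Δ : ℕ} (hGP : H.GoodPair Δ v) (ℓ : Fin q) (ψ : (H.bar v).V → Fin q) :
    extColor H v ℓ ψ (some v) = ψ (H.barVert v) := by
  have h : ¬(v ∈ H.S ∧ H.G.Adj v v) := fun h => hGP.2.2.2.2 h.1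
  rw [extColor_free H v ℓ ψ v h]
  rfl


lemma mono_extColor {Δ : ℕ} (hGP : H.GoodPair Δ v) (ℓ j : Fin q)
    (ψ : (H.bar v).V → Fin q) (hj : ψ (H.barVert v) = j) :
    (H.addLeaf v ℓ).mono (extColor H v ℓ ψ) =
      (H.bar v).mono ψ + H.cvec v j + (if j = ℓ then 1 else 0) := by
  classical
  have hAv : extColor H v ℓ ψ (some v) = j := by rw [extColor_v H v hGP, hj]
  set T : Finset (Sym2 (Option H.V)) :=
    Finset.univ.filter
      (fun e => e ∈ (H.addLeaf v ℓ).G.edgeSet ∧ (e.map (extColor H v ℓ ψ)).IsDiag) with hT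
  set c0 : Sym2 (Option H.V) → Prop := fun e => e = s(none, some v) with hc0
  set c1 : Sym2 (Option H.V) → Prop :=
    fun e => ∃ u, (u ∈ H.S ∧ H.G.Adj v u) ∧ e = s(some u, some v) with hc1
  set c2 : Sym2 (Option H.V) → Prop :=
    fun e => ∃ x y : (H.bar v).V, e = s(some x.1, some y.1) with hc2
  -- coverage
  have cover : ∀ e ∈ T, c0 e ∨ c1 e ∨ c2 e := by
    intro e he
    rw [hT, Finset.mem_filter] at he
    obtain ⟨-, hedge, -⟩ := he
    induction e using Sym2.ind with
    | _ a b =>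
      change (H.addLeaf v ℓ).G.Adj a b at hedge
      rw [addLeaf_adj] at hedge
      rcases hedge with ⟨u, u', rfl, rfl, hadj⟩ | ⟨rfl, rfl⟩ | ⟨rfl, rfl⟩
      · by_cases hu : u ∈ H.S ∧ H.G.Adj v u
        · have : u' = v := pn_adj H v hGP hu hadj
          subst this
          exact Or.inr (Or.inl ⟨u, hu, rfl⟩)
        · by_cases hu' : u' ∈ H.S ∧ H.G.Adj v u'
          · have : u = v := pn_adj H v hGP hu' hadj.symm
            subst this
            exact Or.inr (Or.inl ⟨u', hu', Sym2.eq_swap⟩)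
          · exact Or.inr (Or.inr ⟨⟨u, hu⟩, ⟨u', hu'⟩, rfl⟩)
      · exact Or.inl rfl
      · exact Or.inl Sym2.eq_swap
  -- cardinality split
  have hsplit : T.card = (T.filter c1).card + (T.filter c2).card
      + (T.filter c0).card := by
    have hunion : T = (T.filter c1 ∪ T.filter c2) ∪ T.filter c0 := by
      ext e
      simp only [Finset.mem_union, Finset.mem_filter]
      constructor
      · intro he
        rcases cover e he with h | h | h
        · exact Or.inr ⟨he, h⟩
        · exact Or.inl (Or.inl ⟨he, h⟩)
        · exact Or.inl (Or.inr ⟨he, h⟩)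
      · rintro ((⟨he, -⟩ | ⟨he, -⟩) | ⟨he, -⟩) <;> exact he
    have d12 : Disjoint (T.filter c1) (T.filter c2) := by
      rw [Finset.disjoint_left]
      rintro e he1 he2
      rw [Finset.mem_filter] at he1 he2
      obtain ⟨-, u, hu, rfl⟩ := he1
      obtain ⟨-, x, y, hxy⟩ := he2
      rw [Sym2.eq_iff] at hxy
      rcases hxy with ⟨h1, -⟩ | ⟨h1, -⟩
      · exact x.2 ((Option.some_injective _ h1) ▸ hu)
      · exact y.2 ((Option.some_injective _ h1) ▸ hu)
    have d0 : Disjoint (T.filter c1 ∪ T.filter c2) (T.filter c0) := by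
      rw [Finset.disjoint_left]
      rintro e he1 he0
      rw [Finset.mem_filter] at he0
      obtain ⟨-, rfl⟩ := he0
      simp only [Finset.mem_union, Finset.mem_filter] at he1
      rcases he1 with ⟨-, u, -, h⟩ | ⟨-, x, y, h⟩
      · rw [Sym2.eq_iff] at h
        rcases h with ⟨h, -⟩ | ⟨h, -⟩ <;> exact Option.some_ne_none _ h.symm
      · rw [Sym2.eq_iff] at h
        rcases h with ⟨h, -⟩ | ⟨h, -⟩ <;> exact Option.some_ne_none _ h.symm
    conv_lhs => rw [hunion]
    rw [Finset.card_union_of_disjoint d0, Finset.card_union_of_disjoint d12]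
  -- the c0 count
  have hedge0 : s((none : Option H.V), some v) ∈ (H.addLeaf v ℓ).G.edgeSet := by
    show (H.addLeaf v ℓ).G.Adj _ _
    rw [addLeaf_adj]
    exact Or.inr (Or.inl ⟨rfl, rfl⟩)
  have hmem0 : s((none : Option H.V), some v) ∈ T ↔ ℓ = j := by
    rw [hT, Finset.mem_filter]
    simp only [Finset.mem_univ, true_and, Sym2.map_pair_eq, Sym2.mk_isDiag_iff]
    rw [extColor_none, hAv]
    simp [hedge0]
  have h0 : (T.filter c0).card = if j = ℓ then 1 else 0 := by
    have heq : T.filter c0 = if j = ℓ then {s(none, some v)} else ∅ := by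
      split_ifs with hcase
      · ext e
        simp only [Finset.mem_filter, Finset.mem_singleton, hc0]
        constructor
        · rintro ⟨-, rfl⟩; rfl
        · rintro rfl; exact ⟨hmem0.2 hcase.symm, rfl⟩
      · ext e
        simp only [Finset.mem_filter, Finset.notMem_empty, iff_false, not_and, hc0]
        rintro he rfl
        exact hcase ((hmem0.1 he).symm)
    rw [heq]
    split_ifs <;> simp
  -- the c1 count
  have h1 : (T.filter c1).card = H.cvec v j := by
    rw [cvec]
    symm
    apply Finset.card_bij (fun u _ => s((some u : Option H.V), some v))
    · intro u hu
      rw [nbhd, Finset.filter_filter] at hu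
      rw [Finset.mem_filter] at hu
      obtain ⟨-, hadj, hS, hpin⟩ := hu
      rw [Finset.mem_filter, hT, Finset.mem_filter]
      refine ⟨⟨Finset.mem_univ _, ?_, ?_⟩, ⟨u, ⟨hS, hadj⟩, rfl⟩⟩
      · show (H.addLeaf v ℓ).G.Adj _ _
        rw [addLeaf_adj]
        exact Or.inl ⟨u, v, rfl, rfl, hadj.symm⟩
      · rw [Sym2.map_pair_eq, Sym2.mk_isDiag_iff, hAv,
          extColor_pn H v ℓ ψ u ⟨hS, hadj⟩, hpin]
    · intro u₁ h₁ u₂ h₂ heq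
      rw [Sym2.eq_iff] at heq
      rcases heq with ⟨h, -⟩ | ⟨h, h'⟩
      · exact Option.some_injective _ h
      · rw [Option.some_injective _ h, Option.some_injective _ h'.symm]
    · intro e he
      rw [Finset.mem_filter, hT, Finset.mem_filter] at he
      obtain ⟨⟨-, -, hdiag⟩, u, hu, rfl⟩ := he
      refine ⟨u, ?_, rfl⟩
      rw [nbhd, Finset.filter_filter, Finset.mem_filter]
      rw [Sym2.map_pair_eq, Sym2.mk_isDiag_iff, hAv, extColor_pn H v ℓ ψ u hu] at hdiag
      exact ⟨Finset.mem_univ _, hu.2, hu.1, hdiag⟩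
  -- the c2 count
  have h2 : (T.filter c2).card = (H.bar v).mono ψ := by
    rw [mono]
    symm
    apply Finset.card_bij
      (fun e _ => e.map (fun x : (H.bar v).V => (some x.1 : Option H.V)))
    · intro e he
      rw [Finset.mem_filter] at he
      obtain ⟨-, hedge, hdiag⟩ := he
      induction e using Sym2.ind with
      | _ x y =>
        rw [SimpleGraph.mem_edgeSet] at hedge
        have hadj : H.G.Adj x.1 y.1 := hedge
        rw [Sym2.map_pair_eq, Finset.mem_filter, hT, Finset.mem_filter]
        refine ⟨⟨Finset.mem_univ _, ?_, ?_⟩, ⟨x, y, rfl⟩⟩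
        · show (H.addLeaf v ℓ).G.Adj _ _
          rw [addLeaf_adj]
          exact Or.inl ⟨x.1, y.1, rfl, rfl, hadj⟩
        · rw [Sym2.map_pair_eq, Sym2.mk_isDiag_iff,
            extColor_free H v ℓ ψ x.1 x.2, extColor_free H v ℓ ψ y.1 y.2]
          rw [Sym2.map_pair_eq, Sym2.mk_isDiag_iff] at hdiag
          exact hdiag
    · intro e₁ h₁ e₂ h₂ heq
      exact Sym2.map.injective
        (fun a b hab => Subtype.ext (Option.some_injective _ hab)) heq
    · intro e he
      rw [Finset.mem_filter, hT, Finset.mem_filter] at he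
      obtain ⟨⟨-, hedge, hdiag⟩, x, y, rfl⟩ := he
      refine ⟨s(x, y), ?_, by rw [Sym2.map_pair_eq]⟩
      rw [Finset.mem_filter]
      change (H.addLeaf v ℓ).G.Adj _ _ at hedge
      rw [addLeaf_adj] at hedge
      have hadj : H.G.Adj x.1 y.1 := by
        rcases hedge with ⟨u, u', h1, h2, h⟩ | ⟨h, -⟩ | ⟨-, h⟩
        · rw [Option.some_injective _ h1, Option.some_injective _ h2]
          exact h
        · exact (Option.some_ne_none _ h).elim
        · exact (Option.some_ne_none _ h).elim
      refine ⟨Finset.mem_univ _, hadj, ?_⟩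
      rw [Sym2.map_pair_eq, Sym2.mk_isDiag_iff]
      rw [Sym2.map_pair_eq, Sym2.mk_isDiag_iff,
        extColor_free H v ℓ ψ x.1 x.2, extColor_free H v ℓ ψ y.1 y.2] at hdiag
      exact hdiag
  rw [show (H.addLeaf v ℓ).mono (extColor H v ℓ ψ) = T.card by unfold mono; rw [hT]; congr 1; congr 1]
  rw [hsplit, h1, h2, h0]
  ring


lemma vertex_not_pn {Δ : ℕ} (hGP : H.GoodPair Δ v) : ¬(v ∈ H.S ∧ H.G.Adj v v) :=
  fun h => hGP.2.2.2.2 h.1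

lemma mem_addLeaf_S (ℓ : Fin q) (a : Option H.V) :
    a ∈ (H.addLeaf v ℓ).S ↔ a = none ∨ ∃ u ∈ H.S, a = some u := by
  show a ∈ insert none (H.S.image some) ↔ _
  simp only [Finset.mem_insert, Finset.mem_image]
  constructor
  · rintro (rfl | ⟨u, hu, rfl⟩)
    · exact Or.inl rfl
    · exact Or.inr ⟨u, hu, rfl⟩
  · rintro (rfl | ⟨u, hu, rfl⟩)
    · exact Or.inl rfl
    · exact Or.inr ⟨u, hu, rfl⟩

lemma admissible_extColor (ℓ : Fin q) (ψ : (H.bar v).V → Fin q)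
    (hadm : (H.bar v).admissible ψ) :
    (H.addLeaf v ℓ).admissible (extColor H v ℓ ψ) := by
  intro a ha
  rcases (mem_addLeaf_S H v ℓ a).1 ha with rfl | ⟨u, hu, rfl⟩
  · rfl
  · show extColor H v ℓ ψ (some u) = H.pin u
    by_cases h : u ∈ H.S ∧ H.G.Adj v u
    · exact extColor_pn H v ℓ ψ u h
    · rw [extColor_free H v ℓ ψ u h]
      have hmem : (⟨u, h⟩ : (H.bar v).V) ∈ (H.bar v).S := by
        simp only [bar, Finset.mem_filter, Finset.mem_univ, true_and]
        exact Finset.mem_filter.2 ⟨Finset.mem_univ _, hu⟩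
      exact hadm _ hmem

lemma admissible_res (ℓ : Fin q) (ψA : Option H.V → Fin q)
    (hadm : (H.addLeaf v ℓ).admissible ψA) :
    (H.bar v).admissible (fun x : (H.bar v).V => ψA (some x.1)) := by
  intro x hx
  have hx' : x.1 ∈ H.S := by
    exact (Finset.mem_filter.1 hx).2
  exact hadm _ ((mem_addLeaf_S H v ℓ (some x.1)).2 (Or.inr ⟨x.1, hx', rfl⟩))

lemma extColor_res (ℓ : Fin q) (ψA : Option H.V → Fin q)
    (hadm : (H.addLeaf v ℓ).admissible ψA) :
    extColor H v ℓ (fun x : (H.bar v).V => ψA (some x.1)) = ψA := by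
  funext a
  match a with
  | none =>
      have : ψA none = ℓ := hadm none ((mem_addLeaf_S H v ℓ none).2 (Or.inl rfl))
      rw [extColor_none, this]
  | some u =>
      by_cases h : u ∈ H.S ∧ H.G.Adj v u
      · rw [extColor_pn _ _ _ _ _ h]
        exact (hadm _ ((mem_addLeaf_S H v ℓ (some u)).2 (Or.inr ⟨u, h.1, rfl⟩))).symm
      · rw [extColor_free _ _ _ _ _ h]

lemma res_extColor (ℓ : Fin q) (ψ : (H.bar v).V → Fin q) :
    (fun x : (H.bar v).V => extColor H v ℓ ψ (some x.1)) = ψ := by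
  funext x
  rw [extColor_free H v ℓ ψ x.1 x.2]
  exact congrArg ψ (Subtype.ext rfl)

lemma Zcr_addLeaf {Δ : ℕ} (hGP : H.GoodPair Δ v) (ℓ j : Fin q) (w : ℝ) :
    (H.addLeaf v ℓ).Zcr (some v) j w =
      w ^ (H.cvec v j + if j = ℓ then 1 else 0) *
        (H.bar v).Zcr (H.barVert v) j w := by
  classical
  unfold Zcr
  rw [Finset.mul_sum]
  refine Finset.sum_bij'
    (fun ψA _ => fun x : (H.bar v).V => ψA (some x.1))
    (fun ψ _ => extColor H v ℓ ψ) ?_ ?_ ?_ ?_ ?_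
  · intro ψA hA
    rw [Finset.mem_filter] at hA ⊢
    obtain ⟨-, hadm, hAv⟩ := hA
    refine ⟨Finset.mem_univ _, admissible_res H v ℓ ψA hadm, ?_⟩
    show ψA (some v) = j
    exact hAv
  · intro ψ hB
    rw [Finset.mem_filter] at hB
    obtain ⟨-, hadm, hBv⟩ := hB
    refine Finset.mem_filter.2 ⟨Finset.mem_univ _, admissible_extColor H v ℓ ψ hadm, ?_⟩
    show extColor H v ℓ ψ (some v) = j
    rw [extColor_v H v hGP, hBv]
  · intro ψA hA
    rw [Finset.mem_filter] at hA
    exact extColor_res H v ℓ ψA hA.2.1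
  · intro ψ _
    exact res_extColor H v ℓ ψ
  · intro ψA hA
    rw [Finset.mem_filter] at hA
    obtain ⟨-, hadm, hAv⟩ := hA
    have hres : (fun x : (H.bar v).V => ψA (some x.1)) (H.barVert v) = j := hAv
    have := mono_extColor H v hGP ℓ j (fun x : (H.bar v).V => ψA (some x.1)) hres
    rw [extColor_res H v ℓ ψA hadm] at this
    beta_reduce
    rw [this, pow_add, pow_add]
    ring

lemma Zr_eq_sum (H : PCG q) (v : H.V) (w : ℝ) :
    H.Zr w = ∑ j : Fin q, H.Zcr v j w := by
  classical
  rw [Zr, ← Finset.sum_fiberwise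
    (Finset.univ.filter fun ψ : H.V → Fin q => H.admissible ψ)
    (fun ψ => ψ v) (fun ψ => w ^ H.mono ψ)]
  apply Finset.sum_congr rfl
  intro j _
  rw [Zcr, Finset.filter_filter]

lemma Zr_addLeaf {Δ : ℕ} (hGP : H.GoodPair Δ v) (ℓ : Fin q) (w : ℝ) :
    (H.addLeaf v ℓ).Zr w =
      ∑ i : Fin q, w ^ (H.cvec v i + if i = ℓ then 1 else 0) *
        (H.bar v).Zcr (H.barVert v) i w := by
  rw [Zr_eq_sum (H.addLeaf v ℓ) (some v)]
  exact Finset.sum_congr rfl fun i _ => Zcr_addLeaf H v hGP ℓ i w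

lemma Pr_addLeaf {Δ : ℕ} (hGP : H.GoodPair Δ v) (ℓ j : Fin q) (w : ℝ) :
    (H.addLeaf v ℓ).Pr (some v) j w =
      w ^ (H.cvec v j + if j = ℓ then 1 else 0) * (H.bar v).Zcr (H.barVert v) j w /
        ∑ i : Fin q, w ^ (H.cvec v i + if i = ℓ then 1 else 0) *
          (H.bar v).Zcr (H.barVert v) i w := by
  unfold Pr
  rw [Zcr_addLeaf H v hGP ℓ j w, Zr_addLeaf H v hGP ℓ w]

end PCG

def auxSFun (q : ℕ) (a : Fin q → ℝ) (x : Fin (q - 1) → ℝ) : ℝ :=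
  ∑ i : Fin q, a i * Real.exp (extendLastR q x i)

lemma aux_extendLastR_update (q : ℕ) (R : Fin (q - 1) → ℝ) (j : Fin (q - 1)) (t : ℝ)
    (i : Fin q) :
    extendLastR q (Function.update R j t) i =
      if i = Fin.castLE (Nat.sub_le q 1) j then t else extendLastR q R i := by
  unfold extendLastR
  by_cases h : (i : ℕ) < q - 1
  · rw [dif_pos h]
    by_cases hij : i = Fin.castLE (Nat.sub_le q 1) j
    · have : (⟨(i : ℕ), h⟩ : Fin (q - 1)) = j := by
        apply Fin.ext
        simpa [Fin.ext_iff] using hij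
      rw [if_pos hij, this, Function.update_self]
    · have : (⟨(i : ℕ), h⟩ : Fin (q - 1)) ≠ j := by
        intro hc
        exact hij (by simp [Fin.ext_iff, ← hc])
      rw [if_neg hij, Function.update_of_ne this, dif_pos h]
  · have hij : i ≠ Fin.castLE (Nat.sub_le q 1) j := by
      intro hc
      exact h (by simp [hc, j.2])
    rw [dif_neg h, if_neg hij, dif_neg h]

lemma aux_differentiable_SFun (q : ℕ) (a : Fin q → ℝ) :
    Differentiable ℝ (auxSFun q a) := by
  unfold auxSFun
  apply Differentiable.fun_sum
  intro i _
  apply Differentiable.const_mul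
  by_cases h : (i : ℕ) < q - 1
  · simp only [extendLastR, dif_pos h]
    exact Real.differentiable_exp.comp (differentiable_pi.1 differentiable_id _)
  · simp only [extendLastR, dif_neg h]
    exact differentiable_const _

lemma aux_hasDerivAt_SFun (q : ℕ) (a : Fin q → ℝ) (R : Fin (q - 1) → ℝ)
    (j : Fin (q - 1)) (t₀ : ℝ) :
    HasDerivAt (fun t => auxSFun q a (Function.update R j t))
      (a (Fin.castLE (Nat.sub_le q 1) j) * Real.exp t₀) t₀ := by
  have key : ∀ t, auxSFun q a (Function.update R j t) =
      (∑ i ∈ Finset.univ.erase (Fin.castLE (Nat.sub_le q 1) j),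
        a i * Real.exp (extendLastR q R i)) +
      a (Fin.castLE (Nat.sub_le q 1) j) * Real.exp t := by
    intro t
    rw [auxSFun,
      ← Finset.sum_erase_add _ _ (Finset.mem_univ (Fin.castLE (Nat.sub_le q 1) j))]
    congr 1
    · apply Finset.sum_congr rfl
      intro i hi
      rw [aux_extendLastR_update, if_neg (Finset.ne_of_mem_erase hi)]
    · rw [aux_extendLastR_update, if_pos rfl]
  simp only [key]
  exact ((Real.hasDerivAt_exp t₀).const_mul _).const_add _

lemma aux_SFun_val (q : ℕ) (a : Fin q → ℝ) (R : Fin (q - 1) → ℝ) (Zb : Fin q → ℝ)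
    (hq : q - 1 < q) (hexp : ∀ i : Fin q, Real.exp (extendLastR q R i) = Zb i / Zb ⟨q - 1, hq⟩) :
    auxSFun q a R = (∑ i : Fin q, a i * Zb i) / Zb ⟨q - 1, hq⟩ := by
  rw [auxSFun, Finset.sum_div]
  apply Finset.sum_congr rfl
  intro i _
  rw [hexp i, mul_div_assoc]



/-- The gradient of `F_{w,c}` (viewed as a real function on `ℝ^{q−1}`) at the real
log-ratio vector `R` equals the vector `P_{H,v}(w)` of marginal differences. -/
theorem gradient_real (Δ q : ℕ) (hΔ : 1 ≤ Δ) (hq : Δ + 1 < q)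
    (H : PCG q) (v : H.V) (hGP : PCG.GoodPair Δ H v)
    (w : ℝ) (hw : w ∈ Set.Icc (0 : ℝ) 1)
    (hZbar : ∀ j : Fin q, 0 < (H.bar v).Zcr (H.barVert v) j w)
    (hZ1 : 0 < (H.addLeaf v ⟨0, by omega⟩).Zr w)
    (hZq : 0 < (H.addLeaf v ⟨q - 1, by omega⟩).Zr w)
    (R : Fin (q - 1) → ℝ)
    (hR : ∀ j : Fin (q - 1), R j =
      Real.log ((H.bar v).Zcr (H.barVert v) (Fin.castLE (Nat.sub_le q 1) j) w /
        (H.bar v).Zcr (H.barVert v) ⟨q - 1, by omega⟩ w)) :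
    DifferentiableAt ℝ (FmapR q (H.cvec v) w) R ∧
    ∀ j : Fin (q - 1),
      deriv (fun t => FmapR q (H.cvec v) w (Function.update R j t)) (R j) =
        H.Pvec v w j := by
  classical
  have hqlast : q - 1 < q := by omega
  set c : Fin q → ℕ := H.cvec v with hc
  set Zb : Fin q → ℝ := fun i => (H.bar v).Zcr (H.barVert v) i w with hZbdef
  have hZbpos : ∀ i, 0 < Zb i := hZbar
  have hlastpos : 0 < Zb ⟨q - 1, hqlast⟩ := hZbpos _
  -- exponentials of the log-ratio vector
  have hexp : ∀ i : Fin q, Real.exp (extendLastR q R i) = Zb i / Zb ⟨q - 1, hqlast⟩ := by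
    intro i
    by_cases h : (i : ℕ) < q - 1
    · have h1 : extendLastR q R i = R ⟨i, h⟩ := by simp [extendLastR, h]
      have hcast : Fin.castLE (Nat.sub_le q 1) (⟨(i : ℕ), h⟩ : Fin (q - 1)) = i :=
        Fin.ext rfl
      rw [h1, hR ⟨i, h⟩, hcast]
      exact Real.exp_log (div_pos (hZbpos i) hlastpos)
    · have hi : i = ⟨q - 1, hqlast⟩ := by
        apply Fin.ext
        have := i.2
        simp only []
        omega
      have h0 : extendLastR q R i = 0 := by simp [extendLastR, h]
      rw [h0, Real.exp_zero, hi, div_self hlastpos.ne']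
  -- coefficient functions
  set aP : Fin q → ℝ := fun i => w ^ (c i + if (i : ℕ) = 0 then 1 else 0) with haP
  set aQ : Fin q → ℝ := fun i => w ^ (c i + if (i : ℕ) = q - 1 then 1 else 0) with haQ
  have hPS : ∀ x, PpolyR q c w x = auxSFun q aP x := fun x => rfl
  have hQS : ∀ x, QpolyR q c w x = auxSFun q aQ x := fun x => rfl
  set SP : ℝ := ∑ i : Fin q, aP i * Zb i with hSPdef
  set SQ : ℝ := ∑ i : Fin q, aQ i * Zb i with hSQdef
  have hSP : SP = (H.addLeaf v ⟨0, by omega⟩).Zr w := by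
    rw [PCG.Zr_addLeaf H v hGP]
    apply Finset.sum_congr rfl
    intro i _
    have : (i = (⟨0, by omega⟩ : Fin q)) ↔ ((i : ℕ) = 0) := by simp [Fin.ext_iff]
    simp only [haP, this]
    rfl
  have hSQ : SQ = (H.addLeaf v ⟨q - 1, by omega⟩).Zr w := by
    rw [PCG.Zr_addLeaf H v hGP]
    apply Finset.sum_congr rfl
    intro i _
    have : (i = (⟨q - 1, by omega⟩ : Fin q)) ↔ ((i : ℕ) = q - 1) := by simp [Fin.ext_iff]
    simp only [haQ, this]
    rfl
  have hSPpos : 0 < SP := by rw [hSP]; exact hZ1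
  have hSQpos : 0 < SQ := by rw [hSQ]; exact hZq
  have hPval : PpolyR q c w R = SP / Zb ⟨q - 1, hqlast⟩ := by
    rw [hPS R]
    exact aux_SFun_val q aP R Zb hqlast hexp
  have hQval : QpolyR q c w R = SQ / Zb ⟨q - 1, hqlast⟩ := by
    rw [hQS R]
    exact aux_SFun_val q aQ R Zb hqlast hexp
  have hPpos : 0 < PpolyR q c w R := by
    rw [hPval]; exact div_pos hSPpos hlastpos
  have hQpos : 0 < QpolyR q c w R := by
    rw [hQval]; exact div_pos hSQpos hlastpos
  constructor
  · -- differentiability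
    have hdP : DifferentiableAt ℝ (PpolyR q c w) R := by
      have := (aux_differentiable_SFun q aP) R
      exact this
    have hdQ : DifferentiableAt ℝ (QpolyR q c w) R := by
      have := (aux_differentiable_SFun q aQ) R
      exact this
    have hdiff : DifferentiableAt ℝ (fun x => PpolyR q c w x / QpolyR q c w x) R := by
      simp only [div_eq_mul_inv]
      exact hdP.mul (hdQ.inv hQpos.ne')
    exact hdiff.log (div_pos hPpos hQpos).ne'
  · intro j
    set jb : Fin q := Fin.castLE (Nat.sub_le q 1) j with hjbdef
    have hjb : (jb : ℕ) < q - 1 := j.2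
    -- the two one-dimensional derivatives
    have hderP : HasDerivAt (fun t => PpolyR q c w (Function.update R j t))
        (aP jb * Real.exp (R j)) (R j) := by
      have := aux_hasDerivAt_SFun q aP R j (R j)
      simpa only [← hPS] using this
    have hderQ : HasDerivAt (fun t => QpolyR q c w (Function.update R j t))
        (aQ jb * Real.exp (R j)) (R j) := by
      have := aux_hasDerivAt_SFun q aQ R j (R j)
      simpa only [← hQS] using this
    have hupd : Function.update R j (R j) = R := Function.update_eq_self j R
    have hPat : PpolyR q c w (Function.update R j (R j)) = PpolyR q c w R := by rw [hupd]
    have hQat : QpolyR q c w (Function.update R j (R j)) = QpolyR q c w R := by rw [hupd]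
    have hQne : QpolyR q c w (Function.update R j (R j)) ≠ 0 := by
      rw [hQat]; exact hQpos.ne'
    have hdiv := hderP.div hderQ hQne
    have hratne : PpolyR q c w (Function.update R j (R j)) /
        QpolyR q c w (Function.update R j (R j)) ≠ 0 := by
      rw [hPat, hQat]; exact (div_pos hPpos hQpos).ne'
    have hlog := hdiv.log hratne
    have hfun : (fun t => FmapR q c w (Function.update R j t)) =
        fun t => Real.log (PpolyR q c w (Function.update R j t) /
          QpolyR q c w (Function.update R j t)) := rfl
    have hderiv := hlog.deriv
    simp only [Pi.div_apply] at hderiv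
    rw [← hfun] at hderiv
    rw [hderiv]
    -- now identify the value
    have hexpj : Real.exp (R j) = Zb jb / Zb ⟨q - 1, hqlast⟩ := by
      rw [hR j]
      exact Real.exp_log (div_pos (hZbpos jb) hlastpos)
    -- the marginal-difference vector
    have hPr1 : (H.addLeaf v ⟨0, by omega⟩).Pr (some v) jb w = aP jb * Zb jb / SP := by
      rw [PCG.Pr_addLeaf H v hGP]
      congr 1
      · congr 2
        simp [haP, Fin.ext_iff]
        rfl
      · rw [hSPdef]
        apply Finset.sum_congr rfl
        intro i _
        have : (i = (⟨0, by omega⟩ : Fin q)) ↔ ((i : ℕ) = 0) := by simp [Fin.ext_iff]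
        simp only [haP, this]
        rfl
    have hPr2 : (H.addLeaf v ⟨q - 1, by omega⟩).Pr (some v) jb w = aQ jb * Zb jb / SQ := by
      rw [PCG.Pr_addLeaf H v hGP]
      congr 1
      · congr 2
        simp [haQ, Fin.ext_iff]
        rfl
      · rw [hSQdef]
        apply Finset.sum_congr rfl
        intro i _
        have : (i = (⟨q - 1, by omega⟩ : Fin q)) ↔ ((i : ℕ) = q - 1) := by
          simp [Fin.ext_iff]
        simp only [haQ, this]
        rfl
    have hPvec : H.Pvec v w j = aP jb * Zb jb / SP - aQ jb * Zb jb / SQ := by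
      rw [PCG.Pvec, ← hjbdef, hPr1, hPr2]
    rw [hPvec, hPat, hQat, hPval, hQval, hexpj]
    have hZbne : Zb ⟨q - 1, hqlast⟩ ≠ 0 := hlastpos.ne'
    field_simp

end
end

section
/- Let α > 0 and let Δ, q be positive integers with q ≥ (1+α)Δ + 1. Let (G,v) ∈ 𝒢•_{Δ,q}, let w ∈ [0,1] be such that Z^j_{Ḡ,v}(w) > 0 for every color j, let c = c_{G,v} ∈ ℕ^q, and let R ∈ ℝ^{q−1} be defined by R_j = log(Z^j_{Ḡ,v}(w)/Z^q_{Ḡ,v}(w)). Then (q−Δ)²/(q·e^{1/α}) ≤ P_c(w,R) ≤ q²·e^{1/α}/(q−Δ), the same two-sided bound holds for Q_c(w,R), and consequently (q−Δ)³/(q³·e^{2/α}) ≤ P_c(w,R)/Q_c(w,R) ≤ q³·e^{2/α}/(q−Δ)³. -/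
attribute [local instance 10] Classical.propDecidable

noncomputable section

namespace PCG

variable {q : ℕ}

lemma mem_nbhd {K : PCG q} {x u : K.V} : u ∈ K.nbhd x ↔ K.G.Adj x u := by
  simp [nbhd]

lemma admissible_update {K : PCG q} {ψ : K.V → Fin q} (h : K.admissible ψ)
    {x : K.V} (hx : x ∉ K.S) (a : Fin q) : K.admissible (Function.update ψ x a) := by
  intro u hu
  rw [Function.update_of_ne (by rintro rfl; exact hx hu)]
  exact h u hu

lemma mono_update_le {K : PCG q} {ψ : K.V → Fin q} {x : K.V} {a : Fin q}
    (h : ∀ u ∈ K.nbhd x, ψ u ≠ a) :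
    K.mono (Function.update ψ x a) ≤ K.mono ψ := by
  classical
  apply Finset.card_le_card
  intro e
  induction e using Sym2.ind with
  | _ u v =>
    simp only [Finset.mem_filter, Finset.mem_univ, true_and, Sym2.map_pair_eq,
      Sym2.mk_isDiag_iff, SimpleGraph.mem_edgeSet]
    rintro ⟨hadj, hdiag⟩
    refine ⟨hadj, ?_⟩
    rw [Function.update_apply, Function.update_apply] at hdiag
    split_ifs at hdiag with h1 h2 h2
    · exact (K.G.irrefl (by rw [h1, h2] at hadj; exact hadj)).elim
    · exact absurd hdiag.symm (h v (mem_nbhd.2 (by rwa [h1] at hadj)))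
    · exact absurd hdiag (h u (mem_nbhd.2 (by rw [h2] at hadj; exact hadj.symm)))
    · exact hdiag

lemma sum_pow_congr (K : PCG q) (w : ℝ) {p₁ p₂ : (K.V → Fin q) → Prop}
    (i1 : DecidablePred p₁) (i2 : DecidablePred p₂) (h : ∀ ψ, p₁ ψ ↔ p₂ ψ) :
    (∑ ψ ∈ @Finset.filter _ p₁ i1 Finset.univ, w ^ K.mono ψ)
      = ∑ ψ ∈ @Finset.filter _ p₂ i2 Finset.univ, w ^ K.mono ψ :=
  Finset.sum_congr (@Finset.filter_congr _ p₁ p₂ i1 i2 _ (fun ψ _ => h ψ)) (fun _ _ => rfl)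

lemma keyA (K : PCG q) {w : ℝ} (hw0 : 0 ≤ w) (hw1 : w ≤ 1)
    {x : K.V} (hx : x ∉ K.S) {D : ℕ} (hdeg : K.deg x ≤ D) (hDq : D ≤ q)
    (E : (K.V → Fin q) → Prop) (hE : ∀ ψ (a : Fin q), E ψ → E (Function.update ψ x a))
    (j : Fin q) :
    ((q : ℝ) - D) *
      ∑ ψ ∈ Finset.univ.filter (fun ψ : K.V → Fin q => K.admissible ψ ∧ E ψ ∧ ψ x = j),
        w ^ K.mono ψ ≤
      ∑ ψ ∈ Finset.univ.filter (fun ψ : K.V → Fin q => K.admissible ψ ∧ E ψ),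
        w ^ K.mono ψ := by
  classical
  set s := Finset.univ.filter (fun ψ : K.V → Fin q => K.admissible ψ ∧ E ψ ∧ ψ x = j) with hs
  have hTcard : ∀ ψ : K.V → Fin q, ((q : ℝ) - D) ≤
      ((Finset.univ.filter (fun t : Fin q => ∀ u ∈ K.nbhd x, ψ u ≠ t)).card : ℝ) := by
    intro ψ
    have himg : ((K.nbhd x).image ψ).card ≤ D := le_trans Finset.card_image_le hdeg
    have hsub2 : Finset.univ \ ((K.nbhd x).image ψ)
        ⊆ Finset.univ.filter (fun t : Fin q => ∀ u ∈ K.nbhd x, ψ u ≠ t) := by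
      intro t ht
      rw [Finset.mem_sdiff] at ht
      refine Finset.mem_filter.2 ⟨Finset.mem_univ _, fun u hu he => ht.2 ?_⟩
      exact Finset.mem_image.2 ⟨u, hu, he⟩
    have hcard1 : (Finset.univ \ ((K.nbhd x).image ψ)).card
        = q - ((K.nbhd x).image ψ).card := by
      rw [Finset.card_sdiff_of_subset (Finset.subset_univ _), Finset.card_univ, Fintype.card_fin]
    have h3 : q - D ≤
        (Finset.univ.filter (fun t : Fin q => ∀ u ∈ K.nbhd x, ψ u ≠ t)).card := by
      have h4 := Finset.card_le_card hsub2
      omega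
    calc ((q:ℝ) - D) = ((q - D : ℕ) : ℝ) := (Nat.cast_sub hDq).symm
    _ ≤ _ := Nat.cast_le.2 h3
  have hmono : ∀ ψ ∈ s, ∀ t ∈ Finset.univ.filter (fun t : Fin q => ∀ u ∈ K.nbhd x, ψ u ≠ t),
      w ^ K.mono ψ ≤ w ^ K.mono (Function.update ψ x t) := by
    intro ψ _ t ht
    simp only [Finset.mem_filter, Finset.mem_univ, true_and] at ht
    exact pow_le_pow_of_le_one hw0 hw1 (mono_update_le ht)
  have step1 : ((q:ℝ) - D) * ∑ ψ ∈ s, w ^ K.mono ψ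
      ≤ ∑ ψ ∈ s, ∑ t ∈ Finset.univ.filter (fun t : Fin q => ∀ u ∈ K.nbhd x, ψ u ≠ t),
          w ^ K.mono (Function.update ψ x t) := by
    rw [Finset.mul_sum]
    refine Finset.sum_le_sum fun ψ hψ => ?_
    calc ((q:ℝ) - D) * w ^ K.mono ψ
        ≤ ((Finset.univ.filter (fun t : Fin q => ∀ u ∈ K.nbhd x, ψ u ≠ t)).card : ℝ)
            * w ^ K.mono ψ :=
          mul_le_mul_of_nonneg_right (hTcard ψ) (pow_nonneg hw0 _)
    _ = ∑ _t ∈ Finset.univ.filter (fun t : Fin q => ∀ u ∈ K.nbhd x, ψ u ≠ t),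
          w ^ K.mono ψ := by rw [Finset.sum_const, nsmul_eq_mul]
    _ ≤ _ := Finset.sum_le_sum (hmono ψ hψ)
  have step2 : ∑ ψ ∈ s, ∑ t ∈ Finset.univ.filter (fun t : Fin q => ∀ u ∈ K.nbhd x, ψ u ≠ t),
        w ^ K.mono (Function.update ψ x t)
      = ∑ p ∈ s.sigma (fun ψ => Finset.univ.filter (fun t : Fin q => ∀ u ∈ K.nbhd x, ψ u ≠ t)),
          w ^ K.mono (Function.update p.1 x p.2) :=
    (Finset.sum_sigma s (fun ψ => Finset.univ.filter (fun t : Fin q => ∀ u ∈ K.nbhd x, ψ u ≠ t))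
      (fun p => w ^ K.mono (Function.update p.1 x p.2))).symm
  have hinj : ∀ p ∈ s.sigma (fun ψ => Finset.univ.filter
        (fun t : Fin q => ∀ u ∈ K.nbhd x, ψ u ≠ t)),
      ∀ p' ∈ s.sigma (fun ψ => Finset.univ.filter
        (fun t : Fin q => ∀ u ∈ K.nbhd x, ψ u ≠ t)),
      (fun p : (_ : K.V → Fin q) × Fin q => Function.update p.1 x p.2) p
        = (fun p : (_ : K.V → Fin q) × Fin q => Function.update p.1 x p.2) p' → p = p' := by
    rintro ⟨ψ, t⟩ hp ⟨ψ', t'⟩ hp' heq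
    rw [Finset.mem_sigma, hs] at hp hp'
    simp only [Finset.mem_filter, Finset.mem_univ, true_and] at hp hp' heq
    have hx1 : ψ x = j := hp.1.2.2
    have hx2 : ψ' x = j := hp'.1.2.2
    have ht : t = t' := by
      have h := congrFun heq x
      rwa [Function.update_self, Function.update_self] at h
    have hψ : ψ = ψ' := by
      funext u
      by_cases hu : u = x
      · rw [hu, hx1, hx2]
      · have h := congrFun heq u
        rwa [Function.update_of_ne hu, Function.update_of_ne hu] at h
    simp [hψ, ht]
  have step3 : ∑ p ∈ s.sigma (fun ψ => Finset.univ.filter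
        (fun t : Fin q => ∀ u ∈ K.nbhd x, ψ u ≠ t)),
        w ^ K.mono (Function.update p.1 x p.2)
      = ∑ φ ∈ (s.sigma (fun ψ => Finset.univ.filter
          (fun t : Fin q => ∀ u ∈ K.nbhd x, ψ u ≠ t))).image
            (fun p => Function.update p.1 x p.2),
          w ^ K.mono φ :=
    (Finset.sum_image (f := fun φ => w ^ K.mono φ)
      (g := fun p : (_ : K.V → Fin q) × Fin q => Function.update p.1 x p.2) hinj).symm
  have step4 : ∑ φ ∈ (s.sigma (fun ψ => Finset.univ.filter
        (fun t : Fin q => ∀ u ∈ K.nbhd x, ψ u ≠ t))).image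
          (fun p => Function.update p.1 x p.2),
        w ^ K.mono φ
      ≤ ∑ ψ ∈ Finset.univ.filter (fun ψ : K.V → Fin q => K.admissible ψ ∧ E ψ),
        w ^ K.mono ψ := by
    refine Finset.sum_le_sum_of_subset_of_nonneg ?_ (fun _ _ _ => pow_nonneg hw0 _)
    intro φ hφ
    obtain ⟨⟨ψ, t⟩, hp, rfl⟩ := Finset.mem_image.1 hφ
    rw [Finset.mem_sigma, hs] at hp
    simp only [Finset.mem_filter, Finset.mem_univ, true_and] at hp
    exact Finset.mem_filter.2 ⟨Finset.mem_univ _,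
      admissible_update hp.1.1 hx t, hE ψ t hp.1.2.1⟩
  calc ((q:ℝ) - D) * ∑ ψ ∈ s, w ^ K.mono ψ
      ≤ ∑ ψ ∈ s, ∑ t ∈ Finset.univ.filter (fun t : Fin q => ∀ u ∈ K.nbhd x, ψ u ≠ t),
          w ^ K.mono (Function.update ψ x t) := step1
  _ = _ := step2
  _ = _ := step3
  _ ≤ _ := step4

lemma recolor_sum_le (K : PCG q) {w : ℝ} (hw0 : 0 ≤ w) (hw1 : w ≤ 1)
    {x : K.V} (hx : x ∉ K.S) (t j : Fin q) :
    ∑ ψ ∈ Finset.univ.filter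
        (fun ψ : K.V → Fin q => K.admissible ψ ∧ ψ x = t ∧ ∀ u ∈ K.nbhd x, ψ u ≠ j),
      w ^ K.mono ψ ≤ K.Zcr x j w := by
  classical
  set s := Finset.univ.filter
    (fun ψ : K.V → Fin q => K.admissible ψ ∧ ψ x = t ∧ ∀ u ∈ K.nbhd x, ψ u ≠ j) with hs
  have h1 : ∑ ψ ∈ s, w ^ K.mono ψ ≤ ∑ ψ ∈ s, w ^ K.mono (Function.update ψ x j) := by
    refine Finset.sum_le_sum fun ψ hψ => ?_
    rw [hs] at hψ
    simp only [Finset.mem_filter, Finset.mem_univ, true_and] at hψ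
    exact pow_le_pow_of_le_one hw0 hw1 (mono_update_le hψ.2.2)
  have hinj : ∀ ψ ∈ s, ∀ ψ' ∈ s,
      (fun ψ => Function.update ψ x j) ψ = (fun ψ => Function.update ψ x j) ψ' → ψ = ψ' := by
    intro ψ hψ ψ' hψ' heq
    rw [hs] at hψ hψ'
    simp only [Finset.mem_filter, Finset.mem_univ, true_and] at hψ hψ' heq
    funext u
    by_cases hu : u = x
    · rw [hu, hψ.2.1, hψ'.2.1]
    · have h := congrFun heq u
      rwa [Function.update_of_ne hu, Function.update_of_ne hu] at h
  rw [show ∑ ψ ∈ s, w ^ K.mono (Function.update ψ x j)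
      = ∑ φ ∈ s.image (fun ψ => Function.update ψ x j), w ^ K.mono φ from
    (Finset.sum_image (f := fun φ => w ^ K.mono φ)
      (g := fun ψ => Function.update ψ x j) hinj).symm] at h1
  refine h1.trans (Finset.sum_le_sum_of_subset_of_nonneg ?_ fun _ _ _ => pow_nonneg hw0 _)
  intro φ hφ
  obtain ⟨ψ, hψ, rfl⟩ := Finset.mem_image.1 hφ
  rw [hs] at hψ
  simp only [Finset.mem_filter, Finset.mem_univ, true_and] at hψ
  exact Finset.mem_filter.2 ⟨Finset.mem_univ _,
    admissible_update hψ.1 hx j, Function.update_self x j ψ⟩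

lemma chain (K : PCG q) {w : ℝ} (hw0 : 0 ≤ w) (hw1 : w ≤ 1) {Δ : ℕ}
    (hq2 : Δ + 2 ≤ q) (hdegAll : ∀ u, K.deg u ≤ Δ)
    {x : K.V} (hx : x ∉ K.S) (hnb : ∀ u ∈ K.nbhd x, u ∉ K.S)
    (t j : Fin q) :
    (((q:ℝ) - Δ - 1) / ((q:ℝ) - Δ)) ^ (K.deg x) * K.Zcr x t w ≤ K.Zcr x j w := by
  classical
  have hΔq : (Δ:ℝ) + 2 ≤ q := by exact_mod_cast hq2
  set θ : ℝ := ((q:ℝ) - Δ - 1) / ((q:ℝ) - Δ) with hθdef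
  have hQD : (0:ℝ) < (q:ℝ) - Δ := by linarith
  have hθ0 : 0 ≤ θ := div_nonneg (by linarith) hQD.le
  set W : Finset K.V → ℝ := fun N =>
    ∑ ψ ∈ Finset.univ.filter
      (fun ψ : K.V → Fin q => K.admissible ψ ∧ ψ x = t ∧ ∀ u ∈ N, ψ u ≠ j),
      w ^ K.mono ψ with hW
  have hWnonneg : ∀ N, 0 ≤ W N := fun N => Finset.sum_nonneg fun _ _ => pow_nonneg hw0 _
  have claim : ∀ N : Finset K.V, N ⊆ K.nbhd x → θ ^ N.card * W ∅ ≤ W N := by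
    intro N
    induction N using Finset.induction_on with
    | empty => intro _; simp
    | @insert a N' ha ih =>
      intro hsub
      have hsub' : N' ⊆ K.nbhd x := fun u hu => hsub (Finset.mem_insert_of_mem hu)
      have haX : a ∈ K.nbhd x := hsub (Finset.mem_insert_self a N')
      have hax : x ≠ a := (mem_nbhd.1 haX).ne
      have haS : a ∉ K.S := hnb a haX
      have hkey := keyA K hw0 hw1 haS (hdegAll a) (by omega : Δ ≤ q)
        (fun ψ => ψ x = t ∧ ∀ u ∈ N', ψ u ≠ j)
        (fun ψ b hψ => ⟨by rw [Function.update_of_ne hax]; exact hψ.1,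
          fun u hu => by
            rw [Function.update_of_ne (fun h : u = a => ha (by rw [← h]; exact hu))]
            exact hψ.2 u hu⟩) j
      beta_reduce at hkey
      have hsplit := Finset.sum_filter_add_sum_filter_not
        (Finset.univ.filter
          (fun ψ : K.V → Fin q => K.admissible ψ ∧ ψ x = t ∧ ∀ u ∈ N', ψ u ≠ j))
        (fun ψ => ψ a = j) (fun ψ => w ^ K.mono ψ)
      have e1 : (Finset.univ.filter
            (fun ψ : K.V → Fin q => K.admissible ψ ∧ ψ x = t ∧ ∀ u ∈ N', ψ u ≠ j)).filter
            (fun ψ => ψ a = j)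
          = Finset.univ.filter (fun ψ : K.V → Fin q =>
              K.admissible ψ ∧ (ψ x = t ∧ ∀ u ∈ N', ψ u ≠ j) ∧ ψ a = j) := by
        rw [Finset.filter_filter]
        exact Finset.filter_congr fun ψ _ => by tauto
      have e2 : (Finset.univ.filter
            (fun ψ : K.V → Fin q => K.admissible ψ ∧ ψ x = t ∧ ∀ u ∈ N', ψ u ≠ j)).filter
            (fun ψ => ¬ ψ a = j)
          = Finset.univ.filter (fun ψ : K.V → Fin q =>
              K.admissible ψ ∧ ψ x = t ∧ ∀ u ∈ insert a N', ψ u ≠ j) := by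
        rw [Finset.filter_filter]
        refine Finset.filter_congr fun ψ _ => ?_
        simp only [Finset.forall_mem_insert]
        tauto
      rw [e1, e2] at hsplit
      have hS1nn : 0 ≤ ∑ ψ ∈ Finset.univ.filter (fun ψ : K.V → Fin q =>
          K.admissible ψ ∧ (ψ x = t ∧ ∀ u ∈ N', ψ u ≠ j) ∧ ψ a = j), w ^ K.mono ψ :=
        Finset.sum_nonneg fun _ _ => pow_nonneg hw0 _
      have hWins : W (insert a N') = W N' - ∑ ψ ∈ Finset.univ.filter (fun ψ : K.V → Fin q =>
          K.admissible ψ ∧ (ψ x = t ∧ ∀ u ∈ N', ψ u ≠ j) ∧ ψ a = j), w ^ K.mono ψ := by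
        simp only [hW]
        linarith [hsplit]
      have h6' : ((q:ℝ) - Δ) * ∑ ψ ∈ Finset.univ.filter (fun ψ : K.V → Fin q =>
          K.admissible ψ ∧ (ψ x = t ∧ ∀ u ∈ N', ψ u ≠ j) ∧ ψ a = j), w ^ K.mono ψ
          ≤ W N' := by
        simp only [hW]
        refine le_trans (le_of_eq ?_) (le_trans hkey (le_of_eq ?_))
        · exact congrArg (fun z => ((q:ℝ) - Δ) * z)
            (K.sum_pow_congr w _ _ (fun ψ => by tauto))
        · exact K.sum_pow_congr w _ _ (fun ψ => by tauto)
      have h5 : θ * W N' ≤ W (insert a N') := by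
        have h7 : θ * W N' = W N' - W N' / ((q:ℝ) - Δ) := by
          rw [hθdef]
          field_simp
        have h8 : ∑ ψ ∈ Finset.univ.filter (fun ψ : K.V → Fin q =>
            K.admissible ψ ∧ (ψ x = t ∧ ∀ u ∈ N', ψ u ≠ j) ∧ ψ a = j), w ^ K.mono ψ
            ≤ W N' / ((q:ℝ) - Δ) := by
          rw [le_div_iff₀ hQD]
          linarith [h6']
        rw [hWins, h7]
        linarith
      calc θ ^ (insert a N').card * W ∅ = θ * (θ ^ N'.card * W ∅) := by
            rw [Finset.card_insert_of_notMem ha, pow_succ]; ring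
      _ ≤ θ * W N' := mul_le_mul_of_nonneg_left (ih hsub') hθ0
      _ ≤ W (insert a N') := h5
  have h7 := claim (K.nbhd x) Finset.Subset.rfl
  have hWempty : W ∅ = K.Zcr x t w := by
    simp only [hW]
    rw [Zcr]
    exact Finset.sum_congr (Finset.filter_congr fun ψ _ => by simp) (fun _ _ => rfl)
  have h8 : W (K.nbhd x) ≤ K.Zcr x j w := by
    simp only [hW]
    exact recolor_sum_le K hw0 hw1 hx t j
  calc θ ^ (K.deg x) * K.Zcr x t w = θ ^ (K.nbhd x).card * W ∅ := by rw [hWempty, deg]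
  _ ≤ W (K.nbhd x) := h7
  _ ≤ K.Zcr x j w := h8

lemma marginal_le (K : PCG q) {w : ℝ} (hw0 : 0 ≤ w) (hw1 : w ≤ 1)
    {x : K.V} (hx : x ∉ K.S) {Δ : ℕ} (hdeg : K.deg x ≤ Δ) (hΔq : Δ ≤ q) (j : Fin q) :
    ((q:ℝ) - Δ) * K.Zcr x j w ≤ K.Zr w := by
  have h := keyA K hw0 hw1 hx hdeg hΔq (fun _ => True) (fun _ _ _ => trivial) j
  simp only [true_and, and_true] at h
  rw [Zcr, Zr]
  exact h

lemma Zr_eq_sum_s6 (K : PCG q) (x : K.V) (w : ℝ) :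
    K.Zr w = ∑ j : Fin q, K.Zcr x j w := by
  classical
  rw [Zr, ← Finset.sum_fiberwise_of_maps_to
    (g := fun ψ : K.V → Fin q => ψ x) (t := Finset.univ)
    (fun ψ _ => Finset.mem_univ _) (fun ψ => w ^ K.mono ψ)]
  refine Finset.sum_congr rfl fun j _ => ?_
  rw [Zcr, Finset.filter_filter]

lemma barVert_not_mem_S {H : PCG q} {v : H.V} (hv : v ∉ H.S) :
    H.barVert v ∉ (H.bar v).S := by
  intro h
  have h' : H.barVert v ∈ Finset.univ.filter
      (fun u : (H.bar v).V => u.1 ∈ H.S) := h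
  simp only [Finset.mem_filter, Finset.mem_univ, true_and] at h'
  exact hv h'

lemma bar_adj {H : PCG q} {v : H.V} {a b : (H.bar v).V} :
    (H.bar v).G.Adj a b ↔ H.G.Adj a.1 b.1 := Iff.rfl

lemma bar_deg_le {H : PCG q} {v : H.V} {Δ : ℕ} (hd : H.maxDegLE Δ) :
    ∀ u : (H.bar v).V, (H.bar v).deg u ≤ Δ := by
  intro u
  refine le_trans ?_ (hd u.1)
  rw [deg, deg]
  apply Finset.card_le_card_of_injOn Subtype.val
  · intro a ha
    have ha' : (H.bar v).G.Adj u a := mem_nbhd.1 (Finset.mem_coe.1 ha)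
    exact Finset.mem_coe.2 (mem_nbhd.2 (bar_adj.1 ha'))
  · exact Subtype.val_injective.injOn

lemma bar_nbhd_free {H : PCG q} {v : H.V} :
    ∀ u ∈ (H.bar v).nbhd (H.barVert v), u ∉ (H.bar v).S := by
  intro u hu hS
  rw [mem_nbhd] at hu
  have hS' : u ∈ Finset.univ.filter (fun u : (H.bar v).V => u.1 ∈ H.S) := hS
  simp only [Finset.mem_filter, Finset.mem_univ, true_and] at hS'
  exact u.2 ⟨hS', bar_adj.1 hu⟩

lemma bar_deg_add {H : PCG q} (v : H.V) :
    (H.bar v).deg (H.barVert v) + ∑ j : Fin q, H.cvec v j = H.deg v := by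
  classical
  have h1 : ∑ j : Fin q, H.cvec v j = ((H.nbhd v).filter (fun u => u ∈ H.S)).card := by
    rw [Finset.card_eq_sum_card_fiberwise
      (f := H.pin) (t := Finset.univ) (fun u _ => Finset.mem_univ _)]
    refine Finset.sum_congr rfl fun j _ => ?_
    rw [cvec, Finset.filter_filter]
  have h2 : (H.bar v).deg (H.barVert v) = ((H.nbhd v).filter (fun u => u ∉ H.S)).card := by
    rw [deg]
    apply Finset.card_bij (fun u _ => u.1)
    · intro a ha
      rw [mem_nbhd] at ha
      have ha' : H.G.Adj v a.1 := bar_adj.1 ha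
      exact Finset.mem_filter.2 ⟨mem_nbhd.2 ha', fun hS => a.2 ⟨hS, ha'⟩⟩
    · intro a _ b _ h
      exact Subtype.ext h
    · intro b hb
      rw [Finset.mem_filter, mem_nbhd] at hb
      refine ⟨⟨b, fun h => hb.2 h.1⟩, ?_, rfl⟩
      exact (mem_nbhd (K := H.bar v)).2 (bar_adj.2 hb.1)
  have h3 := Finset.card_filter_add_card_filter_not
    (s := H.nbhd v) (p := fun u => u ∈ H.S)
  rw [h1, h2, deg]
  omega

end PCG
lemma ratio_eq1 (Q D E : ℝ) (hQ : Q ≠ 0) (hD : D ≠ 0) (hE : E ≠ 0) :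
    (D^2/(Q*E))/(Q^2*E/D) = D^3/(Q^3*(E*E)) := by
  field_simp

lemma ratio_eq2 (Q D E : ℝ) (hQ : Q ≠ 0) (hD : D ≠ 0) (hE : E ≠ 0) :
    (Q^2*E/D)/(D^2/(Q*E)) = Q^3*(E*E)/D^3 := by
  field_simp

/-- Bounds on `P_c(w,R)` and `Q_c(w,R)` and their ratio (Lemma 4.1). -/
theorem ratio_bounds (α : ℝ) (hα : 0 < α) (Δ q : ℕ) (hΔ : 0 < Δ) (hq : 0 < q)
    (hqΔ : (1 + α) * (Δ : ℝ) + 1 ≤ (q : ℝ))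
    (H : PCG q) (v : H.V) (hGP : PCG.GoodPair Δ H v)
    (w : ℝ) (hw : w ∈ Set.Icc (0 : ℝ) 1)
    (hZbar : ∀ j : Fin q, 0 < (H.bar v).Zcr (H.barVert v) j w)
    (R : Fin (q - 1) → ℝ)
    (hR : ∀ j : Fin (q - 1), R j =
      Real.log ((H.bar v).Zcr (H.barVert v) (Fin.castLE (Nat.sub_le q 1) j) w /
        (H.bar v).Zcr (H.barVert v) ⟨q - 1, Nat.sub_lt hq one_pos⟩ w)) :
    (((q : ℝ) - Δ) ^ 2 / ((q : ℝ) * Real.exp (1 / α)) ≤ PpolyR q (H.cvec v) w R ∧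
      PpolyR q (H.cvec v) w R ≤ (q : ℝ) ^ 2 * Real.exp (1 / α) / ((q : ℝ) - Δ)) ∧
    (((q : ℝ) - Δ) ^ 2 / ((q : ℝ) * Real.exp (1 / α)) ≤ QpolyR q (H.cvec v) w R ∧
      QpolyR q (H.cvec v) w R ≤ (q : ℝ) ^ 2 * Real.exp (1 / α) / ((q : ℝ) - Δ)) ∧
    (((q : ℝ) - Δ) ^ 3 / ((q : ℝ) ^ 3 * Real.exp (2 / α)) ≤
        PpolyR q (H.cvec v) w R / QpolyR q (H.cvec v) w R ∧
      PpolyR q (H.cvec v) w R / QpolyR q (H.cvec v) w R ≤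
        (q : ℝ) ^ 3 * Real.exp (2 / α) / ((q : ℝ) - Δ) ^ 3) := by
  classical
  obtain ⟨hw0, hw1⟩ := hw
  obtain ⟨-, hmax, -, -, hvS⟩ := hGP
  -- numeric facts
  have hΔ1 : (1:ℝ) ≤ (Δ:ℝ) := by exact_mod_cast hΔ
  have hq2 : Δ + 2 ≤ q := by
    have h0 : (0:ℝ) < α * Δ := mul_pos hα (by linarith)
    have h1 : (Δ:ℝ) + 1 < (q:ℝ) := by nlinarith
    have h2 : Δ + 1 < q := by exact_mod_cast h1
    omega
  have hQ2 : (Δ:ℝ) + 2 ≤ (q:ℝ) := by exact_mod_cast hq2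
  have hQD : (0:ℝ) < (q:ℝ) - Δ := by linarith
  have hQpos : (0:ℝ) < (q:ℝ) := by linarith
  have hQD1 : α * Δ ≤ (q:ℝ) - Δ - 1 := by nlinarith
  have hQD1pos : (0:ℝ) < (q:ℝ) - Δ - 1 := by nlinarith
  obtain ⟨θ, hθdef⟩ : ∃ θ : ℝ, θ = ((q:ℝ) - Δ - 1) / ((q:ℝ) - Δ) := ⟨_, rfl⟩
  have hθ0 : 0 < θ := hθdef ▸ div_pos hQD1pos hQD
  have hθ1 : θ ≤ 1 := by rw [hθdef, div_le_one hQD]; linarith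
  obtain ⟨Eα, hEαdef⟩ : ∃ E : ℝ, E = Real.exp (1/α) := ⟨_, rfl⟩
  have hEα0 : 0 < Eα := hEαdef ▸ Real.exp_pos _
  have hθΔE : 1 ≤ θ ^ Δ * Eα := by
    have h1 : ((q:ℝ) - Δ) / ((q:ℝ) - Δ - 1) ≤ Real.exp (1/((q:ℝ)-Δ-1)) := by
      have he : ((q:ℝ)-Δ)/((q:ℝ)-Δ-1) = 1/((q:ℝ)-Δ-1) + 1 := by
        rw [div_add_one hQD1pos.ne']; congr 1; ring
      rw [he]
      exact Real.add_one_le_exp _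
    have h2 : (((q:ℝ)-Δ)/((q:ℝ)-Δ-1)) ^ Δ ≤ Eα := by
      calc (((q:ℝ)-Δ)/((q:ℝ)-Δ-1)) ^ Δ ≤ (Real.exp (1/((q:ℝ)-Δ-1)))^Δ :=
            pow_le_pow_left₀ (by positivity) h1 Δ
      _ = Real.exp ((Δ:ℝ) * (1/((q:ℝ)-Δ-1))) := by rw [Real.exp_nat_mul]
      _ ≤ Eα := by
          rw [hEαdef, Real.exp_le_exp, mul_one_div, div_le_div_iff₀ hQD1pos hα]
          nlinarith
    have h3 : θ * (((q:ℝ)-Δ)/((q:ℝ)-Δ-1)) = 1 := by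
      rw [hθdef]; field_simp
    calc (1:ℝ) = θ^Δ * (((q:ℝ)-Δ)/((q:ℝ)-Δ-1))^Δ := by rw [← mul_pow, h3, one_pow]
    _ ≤ θ^Δ * Eα := mul_le_mul_of_nonneg_left h2 (pow_nonneg hθ0.le Δ)
  -- graph quantities
  set lst : Fin q := ⟨q - 1, Nat.sub_lt hq one_pos⟩ with hlst
  obtain ⟨k, hk⟩ : ∃ k, k = ∑ j : Fin q, H.cvec v j := ⟨_, rfl⟩
  obtain ⟨d, hd⟩ : ∃ d, d = (H.bar v).deg (H.barVert v) := ⟨_, rfl⟩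
  have hdk : d + k ≤ Δ := by
    have h1 := PCG.bar_deg_add (H := H) v
    have h2 := hmax v
    rw [hd, hk]
    omega
  have hkΔ : k ≤ Δ := by omega
  have hxS : H.barVert v ∉ (H.bar v).S := PCG.barVert_not_mem_S hvS
  have hdegB : ∀ u, (H.bar v).deg u ≤ Δ := PCG.bar_deg_le hmax
  have hfree : ∀ u ∈ (H.bar v).nbhd (H.barVert v), u ∉ (H.bar v).S := PCG.bar_nbhd_free
  have hZlst : 0 < (H.bar v).Zcr (H.barVert v) lst w := hZbar lst
  have chainB : ∀ t j : Fin q,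
      θ ^ d * (H.bar v).Zcr (H.barVert v) t w ≤ (H.bar v).Zcr (H.barVert v) j w := by
    intro t j
    rw [hθdef, hd]
    exact PCG.chain (H.bar v) hw0 hw1 hq2 hdegB hxS hfree t j
  have hθd : θ ^ Δ ≤ θ ^ d := pow_le_pow_of_le_one hθ0.le hθ1 (by omega)
  -- upper bound on ratios
  have hup : ∀ j, (H.bar v).Zcr (H.barVert v) j w / (H.bar v).Zcr (H.barVert v) lst w
      ≤ (q:ℝ) * Eα / ((q:ℝ) - Δ) := by
    intro j
    have h1 : ((q:ℝ) - Δ) * (H.bar v).Zcr (H.barVert v) j w ≤ (H.bar v).Zr w :=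
      PCG.marginal_le (H.bar v) hw0 hw1 hxS (hdegB _) (by omega) j
    have h3 : ∀ t : Fin q, (H.bar v).Zcr (H.barVert v) t w
        ≤ Eα * (H.bar v).Zcr (H.barVert v) lst w := by
      intro t
      have h4 := chainB t lst
      calc (H.bar v).Zcr (H.barVert v) t w
          = 1 * (H.bar v).Zcr (H.barVert v) t w := (one_mul _).symm
      _ ≤ (θ^Δ * Eα) * (H.bar v).Zcr (H.barVert v) t w :=
            mul_le_mul_of_nonneg_right hθΔE (hZbar t).le
      _ = Eα * (θ^Δ * (H.bar v).Zcr (H.barVert v) t w) := by ring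
      _ ≤ Eα * (θ^d * (H.bar v).Zcr (H.barVert v) t w) :=
            mul_le_mul_of_nonneg_left
              (mul_le_mul_of_nonneg_right hθd (hZbar t).le) hEα0.le
      _ ≤ Eα * (H.bar v).Zcr (H.barVert v) lst w :=
            mul_le_mul_of_nonneg_left h4 hEα0.le
    have h5 : (H.bar v).Zr w ≤ (q:ℝ) * (Eα * (H.bar v).Zcr (H.barVert v) lst w) := by
      rw [PCG.Zr_eq_sum_s6 (H.bar v) (H.barVert v) w]
      calc ∑ t : Fin q, (H.bar v).Zcr (H.barVert v) t w
          ≤ ∑ _t : Fin q, Eα * (H.bar v).Zcr (H.barVert v) lst w :=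
            Finset.sum_le_sum (fun t _ => h3 t)
      _ = (q:ℝ) * (Eα * (H.bar v).Zcr (H.barVert v) lst w) := by
            rw [Finset.sum_const, Finset.card_univ, Fintype.card_fin, nsmul_eq_mul]
    rw [div_le_div_iff₀ hZlst hQD]
    calc (H.bar v).Zcr (H.barVert v) j w * ((q:ℝ) - Δ)
        = ((q:ℝ) - Δ) * (H.bar v).Zcr (H.barVert v) j w := mul_comm _ _
    _ ≤ (H.bar v).Zr w := h1
    _ ≤ (q:ℝ) * (Eα * (H.bar v).Zcr (H.barVert v) lst w) := h5
    _ = (q:ℝ) * Eα * (H.bar v).Zcr (H.barVert v) lst w := by ring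
  have hlo : ∀ j, θ ^ (Δ - k) ≤
      (H.bar v).Zcr (H.barVert v) j w / (H.bar v).Zcr (H.barVert v) lst w := by
    intro j
    have h4 := chainB lst j
    have h6 : θ ^ (Δ - k) ≤ θ ^ d := pow_le_pow_of_le_one hθ0.le hθ1 (by omega)
    rw [le_div_iff₀ hZlst]
    calc θ ^ (Δ - k) * (H.bar v).Zcr (H.barVert v) lst w
        ≤ θ ^ d * (H.bar v).Zcr (H.barVert v) lst w :=
          mul_le_mul_of_nonneg_right h6 hZlst.le
    _ ≤ (H.bar v).Zcr (H.barVert v) j w := h4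
  -- exponentials
  have hexp : ∀ j : Fin q, Real.exp (extendLastR q R j)
      = (H.bar v).Zcr (H.barVert v) j w / (H.bar v).Zcr (H.barVert v) lst w := by
    intro j
    by_cases hj : (j:ℕ) < q - 1
    · have h1 : extendLastR q R j = R ⟨(j:ℕ), hj⟩ := dif_pos hj
      have h2 : (Fin.castLE (Nat.sub_le q 1) (⟨(j:ℕ), hj⟩ : Fin (q-1))) = j := by
        apply Fin.ext; rfl
      rw [h1, hR ⟨(j:ℕ), hj⟩, h2, Real.exp_log (div_pos (hZbar j) hZlst)]
    · have hval : (j:ℕ) = q - 1 := by have := j.isLt; omega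
      have hj' : j = lst := Fin.ext (by rw [hlst]; exact hval)
      have h1 : extendLastR q R j = 0 := dif_neg hj
      rw [h1, Real.exp_zero, hj', div_self (ne_of_gt hZlst)]
  -- generic bound for a sum with one incremented exponent
  have main : ∀ i0 : ℕ,
      (((q:ℝ) - Δ) ^ 2 / ((q:ℝ) * Eα) ≤
        ∑ j : Fin q, w ^ (H.cvec v j + if (j:ℕ) = i0 then 1 else 0) *
          ((H.bar v).Zcr (H.barVert v) j w / (H.bar v).Zcr (H.barVert v) lst w)) ∧
      (∑ j : Fin q, w ^ (H.cvec v j + if (j:ℕ) = i0 then 1 else 0) *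
          ((H.bar v).Zcr (H.barVert v) j w / (H.bar v).Zcr (H.barVert v) lst w))
        ≤ (q:ℝ) ^ 2 * Eα / ((q:ℝ) - Δ) := by
    intro i0
    have hrat_nn : ∀ j : Fin q,
        0 ≤ (H.bar v).Zcr (H.barVert v) j w / (H.bar v).Zcr (H.barVert v) lst w :=
      fun j => div_nonneg (hZbar j).le hZlst.le
    constructor
    · -- lower bound
      have hb : (Finset.univ.filter (fun j : Fin q => ¬((j:ℕ) ≠ i0 ∧ H.cvec v j = 0))).card
          ≤ 1 + k := by
        have hsub : Finset.univ.filter (fun j : Fin q => ¬((j:ℕ) ≠ i0 ∧ H.cvec v j = 0))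
            ⊆ (Finset.univ.filter (fun j : Fin q => (j:ℕ) = i0)) ∪
              (Finset.univ.filter (fun j : Fin q => H.cvec v j ≠ 0)) := by
          intro j hj
          simp only [Finset.mem_filter, Finset.mem_univ, true_and, not_and_or, not_not,
            Finset.mem_union] at hj ⊢
          tauto
        have hc1 : (Finset.univ.filter (fun j : Fin q => (j:ℕ) = i0)).card ≤ 1 := by
          refine Finset.card_le_one.2 fun a ha b hb => ?_
          simp only [Finset.mem_filter, Finset.mem_univ, true_and] at ha hb
          exact Fin.ext (by omega)
        have hc2 : (Finset.univ.filter (fun j : Fin q => H.cvec v j ≠ 0)).card ≤ k := by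
          rw [hk]
          calc (Finset.univ.filter (fun j : Fin q => H.cvec v j ≠ 0)).card
              = ∑ _j ∈ Finset.univ.filter (fun j : Fin q => H.cvec v j ≠ 0), 1 :=
                Finset.card_eq_sum_ones _
          _ ≤ ∑ j ∈ Finset.univ.filter (fun j : Fin q => H.cvec v j ≠ 0), H.cvec v j :=
                Finset.sum_le_sum (fun j hj =>
                  Nat.one_le_iff_ne_zero.2 (Finset.mem_filter.1 hj).2)
          _ ≤ ∑ j : Fin q, H.cvec v j :=
                Finset.sum_le_sum_of_subset (Finset.filter_subset _ _)
        calc (Finset.univ.filter (fun j : Fin q => ¬((j:ℕ) ≠ i0 ∧ H.cvec v j = 0))).card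
            ≤ ((Finset.univ.filter (fun j : Fin q => (j:ℕ) = i0)) ∪
              (Finset.univ.filter (fun j : Fin q => H.cvec v j ≠ 0))).card :=
              Finset.card_le_card hsub
        _ ≤ _ := Finset.card_union_le _ _
        _ ≤ 1 + k := by omega
      have htot := Finset.card_filter_add_card_filter_not
        (s := (Finset.univ : Finset (Fin q)))
        (p := fun j : Fin q => (j:ℕ) ≠ i0 ∧ H.cvec v j = 0)
      rw [Finset.card_univ, Fintype.card_fin] at htot
      have hG : q ≤ (Finset.univ.filter
          (fun j : Fin q => (j:ℕ) ≠ i0 ∧ H.cvec v j = 0)).card + 1 + k := by omega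
      have hcard : ((q:ℝ) - 1 - (k:ℝ)) ≤ ((Finset.univ.filter
          (fun j : Fin q => (j:ℕ) ≠ i0 ∧ H.cvec v j = 0)).card : ℝ) := by
        have hG' : (q:ℝ) ≤ ((Finset.univ.filter
            (fun j : Fin q => (j:ℕ) ≠ i0 ∧ H.cvec v j = 0)).card : ℝ) + 1 + (k:ℝ) := by
          exact_mod_cast hG
        linarith
      have hterm : ∀ j ∈ Finset.univ.filter (fun j : Fin q => (j:ℕ) ≠ i0 ∧ H.cvec v j = 0),
          θ ^ (Δ - k) ≤ w ^ (H.cvec v j + if (j:ℕ) = i0 then 1 else 0) *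
            ((H.bar v).Zcr (H.barVert v) j w / (H.bar v).Zcr (H.barVert v) lst w) := by
        intro j hj
        simp only [Finset.mem_filter, Finset.mem_univ, true_and] at hj
        rw [hj.2, if_neg hj.1]
        norm_num
        exact hlo j
      have hnum : ((q:ℝ) - Δ) ^ 2 / ((q:ℝ) * Eα) ≤ ((q:ℝ) - 1 - (k:ℝ)) * θ ^ (Δ - k) := by
        have hkR : (k:ℝ) ≤ (Δ:ℝ) := by exact_mod_cast hkΔ
        have hQEpos : (0:ℝ) < (q:ℝ) * Eα := by positivity
        rw [div_le_iff₀ hQEpos]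
        rcases eq_or_lt_of_le hkΔ with hEq | hLt
        · -- k = Δ
          have h0 : Δ - k = 0 := by omega
          have hkR' : (k:ℝ) = (Δ:ℝ) := by exact_mod_cast hEq
          have e1 : 1/α + 1 ≤ Eα := by rw [hEαdef]; exact Real.add_one_le_exp _
          have e2 : (q:ℝ) - Δ ≤ ((q:ℝ) - Δ - 1) * Eα := by
            have e3 : (Δ:ℝ) ≤ ((q:ℝ) - Δ - 1) * (1/α) := by
              rw [mul_one_div, le_div_iff₀ hα]
              linarith
            nlinarith [mul_le_mul_of_nonneg_left e1 hQD1pos.le]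
          rw [h0, pow_zero, mul_one, hkR']
          calc ((q:ℝ) - Δ)^2 = ((q:ℝ) - Δ) * ((q:ℝ) - Δ) := sq ((q:ℝ) - Δ)
          _ ≤ (q:ℝ) * ((q:ℝ) - Δ) := mul_le_mul_of_nonneg_right (by linarith) hQD.le
          _ ≤ (q:ℝ) * (((q:ℝ) - Δ - 1) * Eα) := mul_le_mul_of_nonneg_left e2 hQpos.le
          _ = ((q:ℝ) - 1 - (Δ:ℝ)) * ((q:ℝ) * Eα) := by ring
        · -- k < Δ
          have hkR' : (k:ℝ) + 1 ≤ (Δ:ℝ) := by exact_mod_cast hLt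
          have e3 : θ ^ Δ ≤ θ ^ (Δ - k) :=
            pow_le_pow_of_le_one hθ0.le hθ1 (Nat.sub_le _ _)
          have e4 : (q:ℝ) - Δ ≤ (q:ℝ) - 1 - (k:ℝ) := by linarith
          have e6 : (q:ℝ) - Δ ≤ ((q:ℝ) - 1 - (k:ℝ)) * θ ^ (Δ - k) * Eα := by
            calc (q:ℝ) - Δ = ((q:ℝ) - Δ) * 1 := (mul_one _).symm
            _ ≤ ((q:ℝ) - Δ) * (θ ^ Δ * Eα) := mul_le_mul_of_nonneg_left hθΔE hQD.le
            _ ≤ ((q:ℝ) - 1 - (k:ℝ)) * (θ ^ (Δ - k) * Eα) :=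
                mul_le_mul e4 (mul_le_mul_of_nonneg_right e3 hEα0.le)
                  (by positivity) (by linarith)
            _ = ((q:ℝ) - 1 - (k:ℝ)) * θ ^ (Δ - k) * Eα := by ring
          calc ((q:ℝ) - Δ) ^ 2 = ((q:ℝ) - Δ) * ((q:ℝ) - Δ) := sq ((q:ℝ) - Δ)
          _ ≤ ((q:ℝ) - Δ) * (q:ℝ) := mul_le_mul_of_nonneg_left (by linarith) hQD.le
          _ ≤ (((q:ℝ) - 1 - (k:ℝ)) * θ ^ (Δ - k) * Eα) * (q:ℝ) :=
              mul_le_mul_of_nonneg_right e6 hQpos.le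
          _ = ((q:ℝ) - 1 - (k:ℝ)) * θ ^ (Δ - k) * ((q:ℝ) * Eα) := by ring
      calc ((q:ℝ) - Δ) ^ 2 / ((q:ℝ) * Eα) ≤ ((q:ℝ) - 1 - (k:ℝ)) * θ ^ (Δ - k) := hnum
      _ ≤ (((Finset.univ.filter
            (fun j : Fin q => (j:ℕ) ≠ i0 ∧ H.cvec v j = 0)).card : ℝ)) * θ ^ (Δ - k) :=
            mul_le_mul_of_nonneg_right hcard (pow_nonneg hθ0.le _)
      _ = ∑ _j ∈ Finset.univ.filter (fun j : Fin q => (j:ℕ) ≠ i0 ∧ H.cvec v j = 0),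
            θ ^ (Δ - k) := by rw [Finset.sum_const, nsmul_eq_mul]
      _ ≤ ∑ j ∈ Finset.univ.filter (fun j : Fin q => (j:ℕ) ≠ i0 ∧ H.cvec v j = 0),
            w ^ (H.cvec v j + if (j:ℕ) = i0 then 1 else 0) *
              ((H.bar v).Zcr (H.barVert v) j w / (H.bar v).Zcr (H.barVert v) lst w) :=
            Finset.sum_le_sum hterm
      _ ≤ ∑ j : Fin q, w ^ (H.cvec v j + if (j:ℕ) = i0 then 1 else 0) *
            ((H.bar v).Zcr (H.barVert v) j w / (H.bar v).Zcr (H.barVert v) lst w) :=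
            Finset.sum_le_sum_of_subset_of_nonneg (Finset.subset_univ _)
              (fun j _ _ => mul_nonneg (pow_nonneg hw0 _) (hrat_nn j))
    · -- upper bound
      calc ∑ j : Fin q, w ^ (H.cvec v j + if (j:ℕ) = i0 then 1 else 0) *
            ((H.bar v).Zcr (H.barVert v) j w / (H.bar v).Zcr (H.barVert v) lst w)
          ≤ ∑ _j : Fin q, (q:ℝ) * Eα / ((q:ℝ) - Δ) := by
            refine Finset.sum_le_sum fun j _ => ?_
            have h1 : w ^ (H.cvec v j + if (j:ℕ) = i0 then 1 else 0) ≤ 1 :=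
              pow_le_one₀ hw0 hw1
            calc w ^ (H.cvec v j + if (j:ℕ) = i0 then 1 else 0) *
                  ((H.bar v).Zcr (H.barVert v) j w / (H.bar v).Zcr (H.barVert v) lst w)
                ≤ 1 * ((H.bar v).Zcr (H.barVert v) j w /
                    (H.bar v).Zcr (H.barVert v) lst w) :=
                  mul_le_mul_of_nonneg_right h1 (hrat_nn j)
            _ = (H.bar v).Zcr (H.barVert v) j w / (H.bar v).Zcr (H.barVert v) lst w :=
                  one_mul _
            _ ≤ (q:ℝ) * Eα / ((q:ℝ) - Δ) := hup j
      _ = (q:ℝ) * ((q:ℝ) * Eα / ((q:ℝ) - Δ)) := by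
            rw [Finset.sum_const, Finset.card_univ, Fintype.card_fin, nsmul_eq_mul]
      _ = (q:ℝ) ^ 2 * Eα / ((q:ℝ) - Δ) := by
            rw [eq_div_iff (ne_of_gt hQD)]
            field_simp
  -- instantiate
  have hPeq : PpolyR q (H.cvec v) w R
      = ∑ j : Fin q, w ^ (H.cvec v j + if (j:ℕ) = 0 then 1 else 0) *
        ((H.bar v).Zcr (H.barVert v) j w / (H.bar v).Zcr (H.barVert v) lst w) := by
    rw [PpolyR]
    exact Finset.sum_congr rfl fun j _ => by rw [hexp j]
  have hQeq : QpolyR q (H.cvec v) w R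
      = ∑ j : Fin q, w ^ (H.cvec v j + if (j:ℕ) = q - 1 then 1 else 0) *
        ((H.bar v).Zcr (H.barVert v) j w / (H.bar v).Zcr (H.barVert v) lst w) := by
    rw [QpolyR]
    exact Finset.sum_congr rfl fun j _ => by rw [hexp j]
  have hP := main 0
  have hQQ := main (q - 1)
  rw [← hPeq] at hP
  rw [← hQeq] at hQQ
  rw [hEαdef] at hP hQQ
  have hL : (0:ℝ) < ((q:ℝ) - Δ) ^ 2 / ((q:ℝ) * Real.exp (1/α)) := by positivity
  have hU : (0:ℝ) < (q:ℝ) ^ 2 * Real.exp (1/α) / ((q:ℝ) - Δ) := by positivity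
  have hE2 : Real.exp (1/α) * Real.exp (1/α) = Real.exp (2/α) := by
    rw [← Real.exp_add]
    congr 1
    ring
  have hQne : (q:ℝ) ≠ 0 := ne_of_gt hQpos
  have hQDne : (q:ℝ) - Δ ≠ 0 := ne_of_gt hQD
  have hEne : Real.exp (1/α) ≠ 0 := ne_of_gt (Real.exp_pos _)
  refine ⟨hP, hQQ, ?_, ?_⟩
  · have h1 : (((q:ℝ) - Δ) ^ 2 / ((q:ℝ) * Real.exp (1/α))) /
        ((q:ℝ) ^ 2 * Real.exp (1/α) / ((q:ℝ) - Δ))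
        ≤ PpolyR q (H.cvec v) w R / QpolyR q (H.cvec v) w R :=
      div_le_div₀ (le_trans hL.le hP.1) hP.1 (lt_of_lt_of_le hL hQQ.1) hQQ.2
    have heq : (((q:ℝ) - Δ) ^ 2 / ((q:ℝ) * Real.exp (1/α))) /
        ((q:ℝ) ^ 2 * Real.exp (1/α) / ((q:ℝ) - Δ))
        = ((q:ℝ) - Δ) ^ 3 / ((q:ℝ) ^ 3 * Real.exp (2/α)) := by
      rw [← hE2]
      exact ratio_eq1 _ _ _ hQne hQDne hEne
    calc ((q:ℝ) - Δ) ^ 3 / ((q:ℝ) ^ 3 * Real.exp (2/α)) = _ := heq.symm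
    _ ≤ _ := h1
  · have h1 : PpolyR q (H.cvec v) w R / QpolyR q (H.cvec v) w R
        ≤ ((q:ℝ) ^ 2 * Real.exp (1/α) / ((q:ℝ) - Δ)) /
          (((q:ℝ) - Δ) ^ 2 / ((q:ℝ) * Real.exp (1/α))) :=
      div_le_div₀ hU.le hP.2 hL hQQ.1
    have heq : ((q:ℝ) ^ 2 * Real.exp (1/α) / ((q:ℝ) - Δ)) /
        (((q:ℝ) - Δ) ^ 2 / ((q:ℝ) * Real.exp (1/α)))
        = (q:ℝ) ^ 3 * Real.exp (2/α) / ((q:ℝ) - Δ) ^ 3 := by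
      rw [← hE2]
      exact ratio_eq2 _ _ _ hQne hQDne hEne
    calc PpolyR q (H.cvec v) w R / QpolyR q (H.cvec v) w R ≤ _ := h1
    _ = _ := heq
end
end

section
/- Let u₁, …, u_k be nonzero vectors in ℝ² such that the angle between any two vectors u_i and u_j is at most φ, for some φ ∈ [0, 2π/3). Then |Σ_{j=1}^{k} u_j| ≥ cos(φ/2)·Σ_{j=1}^{k} |u_j|. -/
open InnerProductGeometry Real
open scoped RealInnerProductSpace

/-- If `x + y ≡ t (mod 2π)` with `|x|, |y| ≤ |t| = θ < 2π/3`, then `|x| + |y| = θ`. -/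
lemma barvinok_aux1 (x y t θ : ℝ) (hθ : θ = |t|) (hx : |x| ≤ θ) (hy : |y| ≤ θ)
    (hθlt : θ < 2 * Real.pi / 3) (h : ∃ k : ℤ, x + y - t = 2 * Real.pi * k) :
    |x| + |y| = θ := by
  have hπ := Real.pi_pos
  obtain ⟨k, hk⟩ := h
  have hθ0 : 0 ≤ θ := hθ ▸ abs_nonneg t
  have hxyt : x + y = t := by
    have hb : |x + y - t| ≤ 3 * θ := by
      calc |x + y - t| ≤ |x| + |y| + |t| := by
            refine (abs_sub _ _).trans ?_
            exact add_le_add (abs_add_le x y) le_rfl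
        _ ≤ 3 * θ := by rw [← hθ]; linarith
    by_cases hk0 : k = 0
    · subst hk0; push_cast at hk; linarith
    · exfalso
      have : (2 : ℝ) * Real.pi ≤ |x + y - t| := by
        rw [hk, abs_mul]
        have h1 : (1 : ℝ) ≤ |(k : ℝ)| := by
          rw [← Int.cast_abs]
          exact_mod_cast Int.one_le_abs (by simpa using hk0)
        have h2 : |2 * Real.pi| = 2 * Real.pi := abs_of_pos (by linarith)
        nlinarith [abs_nonneg ((k : ℝ))]
      linarith
  rcases le_or_gt 0 t with ht | ht
  · have hθt : θ = t := by rw [hθ, abs_of_nonneg ht]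
    have hx0 : 0 ≤ x := by
      have : y ≤ θ := (abs_le.mp hy).2
      linarith [hxyt, hθt]
    have hy0 : 0 ≤ y := by
      have : x ≤ θ := (abs_le.mp hx).2
      linarith [hxyt, hθt]
    rw [abs_of_nonneg hx0, abs_of_nonneg hy0, hxyt, hθt]
  · have hθt : θ = -t := by rw [hθ, abs_of_neg ht]
    have hx0 : x ≤ 0 := by
      have : -θ ≤ y := (abs_le.mp hy).1
      linarith [hxyt, hθt]
    have hy0 : y ≤ 0 := by
      have : -θ ≤ x := (abs_le.mp hx).1
      linarith [hxyt, hθt]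
    rw [abs_of_nonpos hx0, abs_of_nonpos hy0]
    linarith [hxyt, hθt]

/-- Cosine bound: if `α + β = θ ≤ φ`, `α, β ≥ 0`, `φ < 2π/3`, then
`cos α + cos β ≥ 2 cos(θ/2) cos(φ/2)`. -/
lemma barvinok_aux2 (α β θ φ : ℝ) (hα : 0 ≤ α) (hβ : 0 ≤ β) (hsum : α + β = θ)
    (hθφ : θ ≤ φ) (hφ0 : 0 ≤ φ) (hφ : φ < 2 * Real.pi / 3) :
    2 * Real.cos (θ / 2) * Real.cos (φ / 2) ≤ Real.cos α + Real.cos β := by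
  have hπ := Real.pi_pos
  have hθ0 : 0 ≤ θ := hsum ▸ add_nonneg hα hβ
  have hcosθ2 : 0 ≤ Real.cos (θ / 2) := by
    apply Real.cos_nonneg_of_mem_Icc
    constructor <;> [linarith; linarith]
  rw [Real.cos_add_cos, hsum]
  have hle : Real.cos (φ / 2) ≤ Real.cos ((α - β) / 2) := by
    rw [← Real.cos_abs ((α - β) / 2)]
    apply Real.cos_le_cos_of_nonneg_of_le_pi (abs_nonneg _)
    · linarith
    · have h1 : |α - β| ≤ θ := by
        rw [abs_le]; constructor <;> linarith
      have h2 : |(α - β) / 2| = |α - β| / 2 := by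
        rw [abs_div]; norm_num
      rw [h2]; linarith
  nlinarith [Real.cos_nonneg_of_mem_Icc (show -(Real.pi/2) ≤ φ/2 ∧ φ/2 ≤ Real.pi/2 by
    constructor <;> linarith)]

set_option maxHeartbeats 1000000

/-- Barvinok's lemma: nonzero plane vectors pairwise making an angle at most
`φ < 2π/3` satisfy `|Σ u_j| ≥ cos(φ/2)·Σ |u_j|`. -/
theorem barvinok_angle_lemma (k : ℕ) (u : Fin k → EuclideanSpace ℝ (Fin 2))
    (hu : ∀ i, u i ≠ 0) (φ : ℝ) (hφ0 : 0 ≤ φ) (hφ : φ < 2 * Real.pi / 3)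
    (hangle : ∀ i j, InnerProductGeometry.angle (u i) (u j) ≤ φ) :
    Real.cos (φ / 2) * ∑ j, ‖u j‖ ≤ ‖∑ j, u j‖ := by
  have hπ := Real.pi_pos
  rcases Nat.eq_zero_or_pos k with hk | hk
  · subst hk; simp
  have : NeZero k := ⟨hk.ne'⟩
  -- choose the pair of maximal angle
  obtain ⟨⟨i₀, j₀⟩, -, hmax⟩ := Finset.exists_max_image (Finset.univ : Finset (Fin k × Fin k))
    (fun p => InnerProductGeometry.angle (u p.1) (u p.2)) ⟨(0, 0), Finset.mem_univ _⟩
  set a := u i₀ with ha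
  set b := u j₀ with hb
  set θ := InnerProductGeometry.angle a b with hθdef
  have ha0 : a ≠ 0 := hu i₀
  have hb0 : b ≠ 0 := hu j₀
  have hθφ : θ ≤ φ := hangle i₀ j₀
  have hθ0 : 0 ≤ θ := InnerProductGeometry.angle_nonneg a b
  have hmax' : ∀ p q : Fin k, InnerProductGeometry.angle (u p) (u q) ≤ θ :=
    fun p q => hmax (p, q) (Finset.mem_univ _)
  haveI : Fact (Module.finrank ℝ (EuclideanSpace ℝ (Fin 2)) = 2) :=
    ⟨finrank_euclideanSpace_fin⟩
  set o := (EuclideanSpace.basisFun (Fin 2) ℝ).toBasis.orientation with ho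
  have hcosθ2 : 0 < Real.cos (θ / 2) := by
    apply Real.cos_pos_of_mem_Ioo
    constructor <;> [linarith; linarith]
  set e := ‖a‖⁻¹ • a + ‖b‖⁻¹ • b with he
  have hna : (0:ℝ) < ‖a‖ := norm_pos_iff.mpr ha0
  have hnb : (0:ℝ) < ‖b‖ := norm_pos_iff.mpr hb0
  -- inner products via angles
  have inner_eq : ∀ x y : EuclideanSpace ℝ (Fin 2),
      ⟪x, y⟫ = Real.cos (InnerProductGeometry.angle x y) * (‖x‖ * ‖y‖) := by
    intro x y
    rcases eq_or_ne x 0 with rfl | hx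
    · simp
    rcases eq_or_ne y 0 with rfl | hy
    · simp
    have hne0 : ‖x‖ * ‖y‖ ≠ 0 :=
      (mul_pos (norm_pos_iff.mpr hx) (norm_pos_iff.mpr hy)).ne'
    rw [InnerProductGeometry.cos_angle x y, div_mul_cancel₀ _ hne0]
  -- key angle sum fact
  have key : ∀ j : Fin k, InnerProductGeometry.angle a (u j) +
      InnerProductGeometry.angle (u j) b = θ := by
    intro j
    set c := u j with hc
    have hc0 : c ≠ 0 := hu j
    have hadd := o.oangle_add ha0 hc0 hb0
    set x := (o.oangle a c).toReal with hx
    set y := (o.oangle c b).toReal with hy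
    set t := (o.oangle a b).toReal with ht
    have hαx : InnerProductGeometry.angle a c = |x| := o.angle_eq_abs_oangle_toReal ha0 hc0
    have hβy : InnerProductGeometry.angle c b = |y| := o.angle_eq_abs_oangle_toReal hc0 hb0
    have hθt : θ = |t| := o.angle_eq_abs_oangle_toReal ha0 hb0
    have hcoe : ((x + y : ℝ) : Real.Angle) = (t : Real.Angle) := by
      rw [hx, hy, ht, Real.Angle.coe_add, Real.Angle.coe_toReal, Real.Angle.coe_toReal,
        Real.Angle.coe_toReal]
      exact hadd
    have hdvd := Real.Angle.angle_eq_iff_two_pi_dvd_sub.mp hcoe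
    have hxθ : |x| ≤ θ := hαx ▸ hmax' i₀ j
    have hyθ : |y| ≤ θ := hβy ▸ hmax' j j₀
    rw [hαx, hβy]
    exact barvinok_aux1 x y t θ hθt hxθ hyθ (lt_of_le_of_lt hθφ hφ) hdvd
  -- lower bound on inner products with e
  have hinner : ∀ j : Fin k, 2 * Real.cos (θ / 2) * Real.cos (φ / 2) * ‖u j‖ ≤ ⟪e, u j⟫ := by
    intro j
    set c := u j with hc
    have hc0 : c ≠ 0 := hu j
    have hnc : (0:ℝ) < ‖c‖ := norm_pos_iff.mpr hc0
    have hev : ⟪e, c⟫ = (Real.cos (InnerProductGeometry.angle a c) +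
        Real.cos (InnerProductGeometry.angle c b)) * ‖c‖ := by
      rw [he, inner_add_left, real_inner_smul_left, real_inner_smul_left,
        inner_eq a c, inner_eq b c,
        InnerProductGeometry.angle_comm b c]
      field_simp
    rw [hev]
    have hsum := key j
    have hα0 := InnerProductGeometry.angle_nonneg a c
    have hβ0 := InnerProductGeometry.angle_nonneg c b
    have := barvinok_aux2 (InnerProductGeometry.angle a c)
      (InnerProductGeometry.angle c b) θ φ hα0 hβ0 hsum hθφ hφ0 hφ
    nlinarith
  -- norm of e
  have hne : ‖e‖ = 2 * Real.cos (θ / 2) := by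
    have hsq : ‖e‖ ^ 2 = (2 * Real.cos (θ / 2)) ^ 2 := by
      rw [he, norm_add_sq_real, norm_smul, norm_smul, real_inner_smul_left,
        real_inner_smul_right, inner_eq a b]
      simp only [norm_inv, norm_norm]
      have hcsq : Real.cos (θ / 2) ^ 2 = 1 / 2 + Real.cos θ / 2 := by
        have h := Real.cos_sq (θ / 2)
        rw [show 2 * (θ / 2) = θ by ring] at h
        exact h
      have h1 : ‖a‖⁻¹ * ‖a‖ = 1 := inv_mul_cancel₀ hna.ne'
      have h2 : ‖b‖⁻¹ * ‖b‖ = 1 := inv_mul_cancel₀ hnb.ne'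
      have h3 : ‖a‖⁻¹ * (‖b‖⁻¹ * (Real.cos θ * (‖a‖ * ‖b‖))) = Real.cos θ := by
        field_simp
      nlinarith [h1, h2, h3, hcsq]
    have h1 : (0:ℝ) ≤ ‖e‖ := norm_nonneg e
    have h2 : (0:ℝ) ≤ 2 * Real.cos (θ / 2) := by linarith
    nlinarith
  -- conclude
  have hsumle : 2 * Real.cos (θ / 2) * Real.cos (φ / 2) * ∑ j, ‖u j‖ ≤ ⟪e, ∑ j, u j⟫ := by
    rw [inner_sum, Finset.mul_sum]
    exact Finset.sum_le_sum fun j _ => hinner j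
  have hcs : ⟪e, ∑ j, u j⟫ ≤ ‖e‖ * ‖∑ j, u j‖ := real_inner_le_norm e _
  rw [hne] at hcs
  nlinarith [hcs, hsumle]
end
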